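/- arXiv:1803.03017 — 3 statements merged into one kernel-verified Lean document; each statement's English description precedes it below -/
import Mathlib

section
/- The set W̄ = W ⊎ W_l of group elements together with infinite reduced words of an arbitrary Coxeter system (W,S), partially ordered by the weak order (x ≤ y iff Φ_x ⊆ Φ_y), is a complete meet semilattice: every nonempty subset of W̄ admits a greatest lower bound in W̄. -/
namespace CoxInf

open List CoxeterSystem

variable {B : Type*} {W : Type*} [Group W] {M : CoxeterMatrix B} (cs : CoxeterSystem M W)

local prefix:100 "s" => cs.simple
local prefix:100 "π" => cs.wordProd
local prefix:100 "ℓ" => cs.length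
local prefix:100 "ris" => cs.rightInvSeq
local prefix:100 "lis" => cs.leftInvSeq

open Classical in
private noncomputable def refFun (i : B) : W × ZMod 2 → W × ZMod 2 :=
  fun p => (s i * p.1 * s i, p.2 + if p.1 = s i then 1 else 0)

private theorem refFun_inv (i : B) : Function.Involutive (refFun cs i) := by
  classical
  intro ⟨x, e⟩
  have h1 : s i * (s i * x * s i) * s i = x := by
    have := cs.simple_mul_simple_self i
    calc s i * (s i * x * s i) * s i = (s i * s i) * x * (s i * s i) := by group
    _ = x := by rw [this]; group
  have h2 : (s i * x * s i = s i) ↔ (x = s i) := by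
    constructor
    · intro h
      calc x = s i * (s i * x * s i) * s i := h1.symm
      _ = s i * (s i) * s i := by rw [h]
      _ = s i := by rw [cs.simple_mul_simple_self, one_mul]
    · intro h; subst h; simp [cs.simple_mul_simple_self]
  simp only [refFun, h1, h2]
  by_cases hx : x = s i
  · simp only [hx, if_pos rfl]
    ext
    · rfl
    · show e + 1 + 1 = e
      rw [add_assoc, (by decide : (1:ZMod 2) + 1 = 0), add_zero]
  · simp [hx]

/-- The Bourbaki permutation of `W × ZMod 2` attached to a simple generator. -/
noncomputable def refPerm (i : B) : Equiv.Perm (W × ZMod 2) :=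
  (refFun_inv cs i).toPerm

open Classical in
theorem refPerm_apply (i : B) (x : W) (e : ZMod 2) :
    refPerm cs i (x, e) = (s i * x * s i, e + if x = s i then 1 else 0) := rfl

open Classical in
/-- Product formula for the permutation representation along a word. -/
theorem refPerm_word (ω : List B) (x : W) (e : ZMod 2) :
    ((ω.map (refPerm cs)).prod) (x, e) =
      (π ω * x * (π ω)⁻¹, e + ((ris ω).count x : ZMod 2)) := by
  induction ω generalizing e with
  | nil => simp
  | cons i ω ih =>
    rw [map_cons, prod_cons, Equiv.Perm.mul_apply, ih, refPerm_apply]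
    have hris : ris (i :: ω) = ((π ω)⁻¹ * (s i) * (π ω)) :: ris ω := rfl
    have hiff : (π ω * x * (π ω)⁻¹ = s i) ↔ (x = (π ω)⁻¹ * (s i) * (π ω)) := by
      constructor
      · intro h
        calc x = (π ω)⁻¹ * (π ω * x * (π ω)⁻¹) * (π ω) := by group
        _ = (π ω)⁻¹ * (s i) * (π ω) := by rw [h]
      · intro h; subst h; group
    have hcount : ((ris (i :: ω)).count x : ZMod 2)
        = ((ris ω).count x : ZMod 2) + if π ω * x * (π ω)⁻¹ = s i then 1 else 0 := by
      rw [hris, count_cons]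
      by_cases h : x = (π ω)⁻¹ * (s i) * (π ω)
      · rw [if_pos (hiff.mpr h), if_pos (by exact beq_iff_eq.mpr h.symm)]
        push_cast; ring
      · rw [if_neg (fun hh => h (hiff.mp hh)), if_neg (by
          intro hh
          exact h (beq_iff_eq.mp hh).symm)]
        push_cast; ring
    ext
    · show s i * (π ω * x * (π ω)⁻¹) * s i = π (i :: ω) * x * (π (i :: ω))⁻¹
      rw [cs.wordProd_cons]
      rw [mul_inv_rev, cs.inv_simple]
      group
    · show e + ((ris ω).count x : ZMod 2) + (if π ω * x * (π ω)⁻¹ = s i then 1 else 0)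
        = e + ((ris (i :: ω)).count x : ZMod 2)
      rw [hcount, add_assoc]

/-! ### Liftability of the permutation representation -/

/-- The doubled alternating word `[i,j,i,j,...]` with `m` blocks `[i,j]`. -/
def altL (i j : B) : ℕ → List B
  | 0 => []
  | m + 1 => i :: j :: altL i j m

theorem prod_altL (i j : B) (m : ℕ) : π (altL i j m) = (s i * s j) ^ m := by
  induction m with
  | zero => simp [altL]
  | succ m ih =>
    rw [altL, cs.wordProd_cons, cs.wordProd_cons, ih, pow_succ']
    rw [mul_assoc]

theorem perm_altL (i j : B) (m : ℕ) :
    ((altL i j m).map (refPerm cs)).prod = (refPerm cs i * refPerm cs j) ^ m := by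
  induction m with
  | zero => simp [altL]
  | succ m ih =>
    rw [altL, map_cons, map_cons, prod_cons, prod_cons, ih, pow_succ']
    rw [mul_assoc]

private theorem y_conj_pow (i j : B) (k : ℤ) :
    s j * (s i * s j) ^ k = (s i * s j) ^ (-k) * s j := by
  have hyy : s j * s j = 1 := cs.simple_mul_simple_self j
  have hconj : s j * (s i * s j) * (s j)⁻¹ = (s i * s j)⁻¹ := by
    rw [cs.inv_simple, mul_inv_rev, cs.inv_simple, cs.inv_simple]
    calc s j * (s i * s j) * s j = (s j * s i) * (s j * s j) := by group
    _ = s j * s i := by rw [hyy, mul_one]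
  have h : s j * (s i * s j) ^ k * (s j)⁻¹ = (s i * s j) ^ (-k) := by
    have hmz := map_zpow (MulAut.conj (s j)) (s i * s j) k
    simp only [MulAut.conj_apply] at hmz
    rw [hmz, hconj, inv_zpow, zpow_neg]
  calc s j * (s i * s j) ^ k
      = (s j * (s i * s j) ^ k * (s j)⁻¹) * s j := by group
  _ = (s i * s j) ^ (-k) * s j := by rw [h]

theorem ris_altL (i j : B) (m : ℕ) :
    ris (altL i j m) = (List.range (2 * m)).map
      (fun k : ℕ => (s i * s j) ^ ((k : ℤ) + 1 - 2 * m) * s j) := by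
  induction m with
  | zero => simp [altL]
  | succ m ih =>
    set p := s i * s j with hp
    have hy : ∀ k : ℤ, s j * p ^ k = p ^ (-k) * s j := y_conj_pow cs i j
    have hπ : π (altL i j m) = p ^ m := prod_altL cs i j m
    have hπ' : π (j :: altL i j m) = s j * p ^ m := by rw [cs.wordProd_cons, hπ]
    have hyxy : s j * s i * s j = p ^ (-1 : ℤ) * s j := by
      rw [zpow_neg, zpow_one, hp, mul_inv_rev, cs.inv_simple, cs.inv_simple, mul_assoc]
    have hynat : s j * p ^ (m : ℕ) = p ^ (-(m : ℤ)) * s j := by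
      rw [← zpow_natCast p m, hy]
    have hinv : (s j * p ^ (m : ℕ))⁻¹ = p ^ (-(m : ℤ)) * s j := by
      rw [mul_inv_rev, cs.inv_simple, ← zpow_natCast p m, ← zpow_neg]
    have he0 : (π (j :: altL i j m))⁻¹ * (s i) * (π (j :: altL i j m))
        = p ^ ((0 : ℤ) + 1 - 2 * ((m : ℤ) + 1)) * s j := by
      rw [hπ', hinv]
      calc p ^ (-(m : ℤ)) * s j * s i * (s j * p ^ (m : ℕ))
          = p ^ (-(m : ℤ)) * (s j * s i * s j) * p ^ (m : ℕ) := by group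
      _ = p ^ (-(m : ℤ)) * (p ^ (-1 : ℤ) * s j) * p ^ (m : ℕ) := by rw [hyxy]
      _ = p ^ (-(m : ℤ) + -1) * (s j * p ^ (m : ℕ)) := by
          rw [zpow_add]; group
      _ = p ^ (-(m : ℤ) + -1) * (p ^ (-(m : ℤ)) * s j) := by rw [hynat]
      _ = p ^ (-(m : ℤ) + -1 + -(m : ℤ)) * s j := by rw [← mul_assoc, ← zpow_add]
      _ = p ^ ((0 : ℤ) + 1 - 2 * ((m : ℤ) + 1)) * s j := by
          rw [show -(m : ℤ) + -1 + -(m : ℤ) = (0 : ℤ) + 1 - 2 * ((m : ℤ) + 1) by ring]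
    have he1 : (π (altL i j m))⁻¹ * (s j) * (π (altL i j m))
        = p ^ ((1 : ℤ) + 1 - 2 * ((m : ℤ) + 1)) * s j := by
      rw [hπ]
      calc (p ^ (m : ℕ))⁻¹ * s j * p ^ (m : ℕ)
          = p ^ (-(m : ℤ)) * (s j * p ^ (m : ℕ)) := by
            rw [← zpow_natCast p m, ← zpow_neg]; group
      _ = p ^ (-(m : ℤ)) * (p ^ (-(m : ℤ)) * s j) := by rw [hynat]
      _ = p ^ (-(m : ℤ) + -(m : ℤ)) * s j := by rw [← mul_assoc, ← zpow_add]
      _ = p ^ ((1 : ℤ) + 1 - 2 * ((m : ℤ) + 1)) * s j := by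
          rw [show -(m : ℤ) + -(m : ℤ) = (1 : ℤ) + 1 - 2 * ((m : ℤ) + 1) by ring]
    have hcons : ris (altL i j (m+1)) =
        ((π (j :: altL i j m))⁻¹ * (s i) * (π (j :: altL i j m)))
        :: ((π (altL i j m))⁻¹ * (s j) * (π (altL i j m)))
        :: ris (altL i j m) := rfl
    have hrange : List.range (2 * (m + 1)) = 0 :: 1 ::
        (List.range (2 * m)).map (fun k : ℕ => k + 2) := by
      have h2 : 2 * (m + 1) = (2 * m + 1) + 1 := by ring
      rw [h2, List.range_succ_eq_map, List.range_succ_eq_map, List.map_cons, List.map_map]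
      rfl
    rw [hcons, ih, hrange, List.map_cons, List.map_cons, List.map_map]
    refine congrArg₂ List.cons ?_ (congrArg₂ List.cons ?_ ?_)
    · rw [he0]
      congr 1
    · rw [he1]
      congr 1
    · apply List.map_congr_left
      intro k _
      show p ^ ((k : ℤ) + 1 - 2 * (m : ℕ)) * s j
        = p ^ (((k + 2 : ℕ) : ℤ) + 1 - 2 * ((m + 1 : ℕ) : ℕ)) * s j
      congr 2
      push_cast
      ring

theorem refPerm_liftable : M.IsLiftable (refPerm cs) := by
  classical
  intro i j
  set m := M i j with hm
  have hrel : (s i * s j) ^ m = 1 := cs.simple_mul_simple_pow i j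
  apply Equiv.ext
  rintro ⟨x, e⟩
  rw [← perm_altL, refPerm_word]
  have h1 : π (altL i j m) = 1 := by rw [prod_altL, hrel]
  have hhalf : ris (altL i j m) =
      ((List.range m).map (fun k : ℕ => (s i * s j) ^ ((k : ℤ) + 1 - 2 * m) * s j)) ++
      ((List.range m).map (fun k : ℕ => (s i * s j) ^ ((k : ℤ) + 1 - 2 * m) * s j)) := by
    rw [ris_altL]
    rw [show 2 * m = m + m by ring, List.range_add, List.map_append]
    congr 1
    rw [List.map_map]
    apply List.map_congr_left
    intro k _
    show (s i * s j) ^ (((m + k : ℕ) : ℤ) + 1 - 2 * m) * s j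
        = (s i * s j) ^ ((k : ℤ) + 1 - 2 * m) * s j
    have hz : (s i * s j) ^ ((m : ℕ) : ℤ) = 1 := by
      rw [zpow_natCast, hrel]
    congr 1
    rw [show ((m + k : ℕ) : ℤ) + 1 - 2 * m = ((k : ℤ) + 1 - 2 * m) + ((m : ℕ) : ℤ) by
      push_cast; ring]
    rw [zpow_add, hz, mul_one]
  have hcount : (((ris (altL i j m)).count x : ℕ) : ZMod 2) = 0 := by
    rw [hhalf, List.count_append]
    push_cast
    rw [← two_mul, show (2 : ZMod 2) = 0 by decide, zero_mul]
  rw [h1, hcount]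
  simp

/-! ### The representation as a homomorphism; strong exchange -/

/-- The permutation representation `W →* Perm (W × ZMod 2)`. -/
noncomputable def refRep : W →* Equiv.Perm (W × ZMod 2) :=
  cs.lift ⟨refPerm cs, refPerm_liftable cs⟩

theorem refRep_simple (i : B) : refRep cs (s i) = refPerm cs i :=
  cs.lift_apply_simple (refPerm_liftable cs) i

theorem refRep_word (ω : List B) : refRep cs (π ω) = (ω.map (refPerm cs)).prod := by
  induction ω with
  | nil => simp [cs.wordProd_nil]
  | cons i ω ih =>
    rw [cs.wordProd_cons, map_mul, refRep_simple, ih, map_cons, prod_cons]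

theorem refRep_shift (w x : W) :
    ∃ c : ZMod 2, ∀ e, refRep cs w (x, e) = (w * x * w⁻¹, e + c) := by
  obtain ⟨ω, hω⟩ := cs.wordProd_surjective w
  classical
  refine ⟨((ris ω).count x : ZMod 2), fun e => ?_⟩
  rw [← hω, refRep_word, refPerm_word]

theorem refRep_reflection {t : W} (ht : cs.IsReflection t) (e : ZMod 2) :
    refRep cs t (t, e) = (t, e + 1) := by
  obtain ⟨v, i, rfl⟩ := ht
  obtain ⟨c, hc⟩ := refRep_shift cs v (s i)
  obtain ⟨c', hc'⟩ := refRep_shift cs v⁻¹ (v * s i * v⁻¹)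
  have hvsi : v⁻¹ * (v * s i * v⁻¹) * v⁻¹⁻¹ = s i := by group
  rw [hvsi] at hc'
  have hsum : c' + c = 0 := by
    have h1 : refRep cs v (refRep cs v⁻¹ (v * s i * v⁻¹, 0)) = (v * s i * v⁻¹, 0) := by
      rw [← Equiv.Perm.mul_apply, ← map_mul, mul_inv_cancel, map_one]
      simp
    rw [hc' 0, hc (0 + c')] at h1
    have h2 := congrArg Prod.snd h1
    simp only at h2
    calc c' + c = 0 + c' + c := by rw [zero_add]
    _ = 0 := h2
  have hrep : refRep cs (v * s i * v⁻¹)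
      = refRep cs v * (refRep cs (s i) * refRep cs v⁻¹) := by
    rw [← map_mul, ← map_mul]
    congr 1
    group
  rw [hrep, Equiv.Perm.mul_apply, Equiv.Perm.mul_apply, hc' e, refRep_simple,
    refPerm_apply, if_pos rfl]
  have hsss : s i * s i * s i = s i := by rw [cs.simple_mul_simple_self, one_mul]
  rw [hsss, hc (e + c' + 1)]
  have : e + c' + 1 + c = e + 1 := by
    calc e + c' + 1 + c = e + 1 + (c' + c) := by ring
    _ = e + 1 := by rw [hsum, add_zero]
  rw [this]

/-- Multiplying by a member of the right inversion sequence drops the length below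
the word length. -/
theorem length_lt_of_mem_rightInvSeq (ω : List B) {t : W} (ht : t ∈ ris ω) :
    ℓ (π ω * t) + 1 ≤ ω.length := by
  obtain ⟨j, hj, hjt⟩ := List.getElem_of_mem ht
  rw [length_rightInvSeq] at hj
  have hgetD : (ris ω).getD j 1 = t := by
    rw [List.getD_eq_getElem?_getD,
      List.getElem?_eq_getElem (by rwa [length_rightInvSeq])]
    simpa using hjt
  have herase := cs.wordProd_mul_getD_rightInvSeq ω j
  rw [hgetD] at herase
  have hlen : (ω.eraseIdx j).length = ω.length - 1 := by
    rw [List.length_eraseIdx]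
    simp [hj]
  have hle := cs.length_wordProd_le (ω.eraseIdx j)
  rw [← herase] at hle
  omega

/-- **Strong exchange**, right-handed version. -/
theorem mem_rightInvSeq_of_isRightInversion {ω : List B} (hω : cs.IsReduced ω) {t : W}
    (ht : cs.IsRightInversion (π ω) t) : t ∈ ris ω := by
  classical
  by_contra hmem
  obtain ⟨γ, hγred, hγ⟩ := cs.exists_reduced_word' (π ω * t)
  have htt : t * t = 1 := ht.1.mul_self
  have hwt : π γ * t = π ω := by
    rw [← hγ, mul_assoc, htt, mul_one]
  have hmem' : t ∉ ris γ := by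
    intro hmem'
    have h1 := length_lt_of_mem_rightInvSeq cs γ hmem'
    rw [hwt] at h1
    have hlenγ : γ.length = ℓ (π ω * t) := by rw [hγ]; exact hγred.symm
    rw [hlenγ] at h1
    have h2 := ht.2
    omega
  have h0 : (((ris ω).count t : ℕ) : ZMod 2) = 0 := by
    rw [List.count_eq_zero_of_not_mem hmem]
    simp
  have h0' : (((ris γ).count t : ℕ) : ZMod 2) = 0 := by
    rw [List.count_eq_zero_of_not_mem hmem']
    simp
  have heq1 : refRep cs (π ω) (t, 0) = (π ω * t * (π ω)⁻¹, 0) := by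
    rw [refRep_word, refPerm_word, h0, add_zero]
  have hA : refRep cs (π ω * t) (t, (1 : ZMod 2)) = (π ω * t * (π ω)⁻¹, 1) := by
    rw [hγ, refRep_word, refPerm_word, ← hγ, h0', add_zero]
    congr 1
    rw [mul_inv_rev, ht.1.inv]
    calc π ω * t * t * (t * (π ω)⁻¹) = π ω * (t * t) * t * (π ω)⁻¹ := by group
    _ = π ω * t * (π ω)⁻¹ := by rw [htt]; group
  have heq2 : refRep cs (π ω) (t, 0) = (π ω * t * (π ω)⁻¹, 1) := by
    have hsplit : refRep cs (π ω) = refRep cs (π ω * t) * refRep cs t := by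
      rw [← map_mul, mul_assoc, htt, mul_one]
    rw [hsplit, Equiv.Perm.mul_apply, refRep_reflection cs ht.1, zero_add, hA]
  rw [heq1] at heq2
  have h3 := congrArg Prod.snd heq2
  simp only at h3
  exact (by decide : (0 : ZMod 2) ≠ 1) h3

/-- **Strong exchange**, left-handed version. -/
theorem mem_leftInvSeq_of_isLeftInversion {ω : List B} (hω : cs.IsReduced ω) {t : W}
    (ht : cs.IsLeftInversion (π ω) t) : t ∈ lis ω := by
  have hrev : cs.IsReduced ω.reverse := (cs.isReduced_reverse_iff ω).mpr hω
  have ht' : cs.IsRightInversion (π ω.reverse) t := by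
    rw [cs.wordProd_reverse]
    exact cs.isRightInversion_inv_iff.mpr ht
  have h := mem_rightInvSeq_of_isRightInversion cs hrev ht'
  rw [cs.rightInvSeq_reverse] at h
  exact List.mem_reverse.mp h

/-! ### Inversion sets and the weak order -/

/-- The inversion set `Φ_w` of `w⁻¹`, encoded via the canonical bijection between the
positive roots and the reflections: it corresponds to the set of left inversions of `w`. -/
def invSet (cs : CoxeterSystem M W) (w : W) : Set W :=
  {t | cs.IsLeftInversion w t}

theorem invSet_eq_lis {ω : List B} (hω : cs.IsReduced ω) :
    invSet cs (π ω) = {t | t ∈ lis ω} := by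
  ext t
  constructor
  · exact fun ht => mem_leftInvSeq_of_isLeftInversion cs hω ht
  · exact fun ht => cs.isLeftInversion_of_mem_leftInvSeq hω ht

theorem invSet_finite (w : W) : (invSet cs w).Finite := by
  obtain ⟨ω, hred, rfl⟩ := cs.exists_reduced_word' w
  rw [invSet_eq_lis cs hred]
  exact List.finite_toSet _

theorem invSet_one : invSet cs (1 : W) = ∅ := by
  ext t
  simp only [invSet, Set.mem_setOf_eq, Set.mem_empty_iff_false, iff_false]
  rintro ⟨-, hlt⟩
  simp [cs.length_one] at hlt

theorem card_le_of_subset_invSet {w : W} {T : Finset W} (hT : ↑T ⊆ invSet cs w) :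
    T.card ≤ ℓ w := by
  obtain ⟨ω, hred, rfl⟩ := cs.exists_reduced_word' w
  rw [invSet_eq_lis cs hred] at hT
  classical
  have h1 : T ⊆ (lis ω).toFinset := by
    intro t ht
    rw [List.mem_toFinset]
    exact hT ht
  calc T.card ≤ (lis ω).toFinset.card := Finset.card_le_card h1
  _ ≤ (lis ω).length := (lis ω).toFinset_card_le
  _ = ω.length := cs.length_leftInvSeq ω
  _ = ℓ (π ω) := hred.symm

theorem simple_mem_invSet_iff (i : B) (w : W) :
    s i ∈ invSet cs w ↔ ℓ (s i * w) < ℓ w := by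
  constructor
  · exact fun h => h.2
  · exact fun h => ⟨cs.isReflection_simple i, h⟩

theorem length_lt_of_not_simple_mem {i : B} {w : W} (h : s i ∉ invSet cs w) :
    ℓ w < ℓ (s i * w) := by
  rcases cs.length_simple_mul w i with h1 | h1
  · omega
  · exfalso
    exact h ⟨cs.isReflection_simple i, by omega⟩

theorem invSet_take_subset {ω : List B} (hω : cs.IsReduced ω) (n : ℕ) :
    invSet cs (π (ω.take n)) ⊆ invSet cs (π ω) := by
  rw [invSet_eq_lis cs (hω.take n), invSet_eq_lis cs hω]
  intro t ht
  simp only [Set.mem_setOf_eq] at ht ⊢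
  rw [cs.leftInvSeq_take ω n] at ht
  exact List.take_subset n _ ht

/-- Key structure lemma: if `i` is a left descent of `w`, the inversion set of `w` is
obtained from that of `s i * w` by conjugating and inserting `s i`. -/
theorem invSet_descent {i : B} {w : W} (h : ℓ (s i * w) < ℓ w) :
    invSet cs w = insert (s i) ((fun t => s i * t * s i) '' invSet cs (s i * w)) := by
  obtain ⟨ω', hred', hw'⟩ := cs.exists_reduced_word' (s i * w)
  have hlw : ℓ w = ℓ (s i * w) + 1 := by
    rcases cs.length_simple_mul w i with h1 | h1 <;> omega
  have hπ : π (i :: ω') = w := by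
    rw [cs.wordProd_cons, ← hw', cs.simple_mul_simple_cancel_left]
  have hred : cs.IsReduced (i :: ω') := by
    unfold CoxeterSystem.IsReduced
    rw [hπ, List.length_cons, ← hred', ← hw']
    omega
  have hlis : lis (i :: ω') = s i :: List.map (MulAut.conj (s i)) (lis ω') := rfl
  rw [hw', invSet_eq_lis cs hred', ← hπ, invSet_eq_lis cs hred]
  ext t
  simp only [hlis, List.mem_cons, Set.mem_setOf_eq, Set.mem_insert_iff, List.mem_map,
    Set.mem_image]
  constructor
  · rintro (rfl | ⟨a, ha, rfl⟩)
    · exact Or.inl rfl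
    · refine Or.inr ⟨a, ha, ?_⟩
      simp [MulAut.conj_apply, cs.inv_simple]
  · rintro (rfl | ⟨a, ha, rfl⟩)
    · exact Or.inl rfl
    · refine Or.inr ⟨a, ha, ?_⟩
      simp [MulAut.conj_apply, cs.inv_simple]

theorem simple_not_mem_invSet_self {i : B} {w : W} (h : ℓ (s i * w) < ℓ w) :
    s i ∉ invSet cs (s i * w) := by
  intro hmem
  have := hmem.2
  rw [cs.simple_mul_simple_cancel_left] at this
  omega

/-- Transfer of the order along a common left descent. -/
theorem invSet_descent_mono {i : B} {z u : W} (hz : ℓ (s i * z) < ℓ z)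
    (hu : ℓ (s i * u) < ℓ u) (hzu : invSet cs z ⊆ invSet cs u) :
    invSet cs (s i * z) ⊆ invSet cs (s i * u) := by
  intro t ht
  have htne : t ≠ s i := by
    rintro rfl
    exact simple_not_mem_invSet_self cs hz ht
  have h1 : s i * t * s i ∈ invSet cs z := by
    rw [invSet_descent cs hz]
    exact Set.mem_insert_of_mem _ ⟨t, ht, rfl⟩
  have h2 := hzu h1
  rw [invSet_descent cs hu] at h2
  have hx : ∀ b : W, s i * (s i * b * s i) * s i = b := fun b => by
    calc s i * (s i * b * s i) * s i = (s i * s i) * b * (s i * s i) := by group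
    _ = b := by rw [cs.simple_mul_simple_self]; group
  rcases h2 with h2 | ⟨a, ha, haeq⟩
  · exfalso
    apply htne
    calc t = s i * (s i * t * s i) * s i := (hx t).symm
    _ = s i * (s i) * s i := by rw [h2]
    _ = s i := by rw [cs.simple_mul_simple_self, one_mul]
  · have hat : a = t := by
      have h3 := congrArg (fun b => s i * b * s i) haeq
      simp only at h3
      calc a = s i * (s i * a * s i) * s i := (hx a).symm
      _ = s i * (s i * t * s i) * s i := by rw [h3]
      _ = t := hx t
    rwa [← hat]

/-- Monotone transfer in the other direction: multiplying by a non-descent. -/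
theorem invSet_ascent_mono {i : B} {z u : W} (hz : s i ∉ invSet cs z)
    (hu : s i ∉ invSet cs u) (hzu : invSet cs z ⊆ invSet cs u) :
    invSet cs (s i * z) ⊆ invSet cs (s i * u) := by
  have hz' : ℓ (s i * (s i * z)) < ℓ (s i * z) := by
    rw [cs.simple_mul_simple_cancel_left]
    exact length_lt_of_not_simple_mem cs hz
  have hu' : ℓ (s i * (s i * u)) < ℓ (s i * u) := by
    rw [cs.simple_mul_simple_cancel_left]
    exact length_lt_of_not_simple_mem cs hu
  have h1 : invSet cs (s i * z) = insert (s i)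
      ((fun t => s i * t * s i) '' invSet cs z) := by
    have := invSet_descent cs hz'
    rwa [cs.simple_mul_simple_cancel_left] at this
  have h2 : invSet cs (s i * u) = insert (s i)
      ((fun t => s i * t * s i) '' invSet cs u) := by
    have := invSet_descent cs hu'
    rwa [cs.simple_mul_simple_cancel_left] at this
  rw [h1, h2]
  exact Set.insert_subset_insert (Set.image_mono hzu)

private theorem invSet_subset_of_len : ∀ (n : ℕ) (z u : W), ℓ z ≤ n →
    invSet cs z ⊆ invSet cs u → ℓ z + ℓ (z⁻¹ * u) = ℓ u := by
  intro n
  induction n with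
  | zero =>
    intro z u hz _
    have : z = 1 := cs.length_eq_zero_iff.mp (by omega)
    subst this
    simp
  | succ n ih =>
    intro z u hle hsub
    by_cases hz1 : z = 1
    · subst hz1; simp
    · obtain ⟨i, hi⟩ := cs.exists_leftDescent_of_ne_one hz1
      have hi' : ℓ (s i * z) < ℓ z := hi
      have hmem : s i ∈ invSet cs u := hsub ⟨cs.isReflection_simple i, hi'⟩
      have hu' : ℓ (s i * u) < ℓ u := hmem.2
      have hzl : ℓ z = ℓ (s i * z) + 1 := by
        rcases cs.length_simple_mul z i with h1 | h1 <;> omega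
      have hul : ℓ u = ℓ (s i * u) + 1 := by
        rcases cs.length_simple_mul u i with h1 | h1 <;> omega
      have hsub' := invSet_descent_mono cs hi' hu' hsub
      have hIH := ih (s i * z) (s i * u) (by omega) hsub'
      have hinv : (s i * z)⁻¹ * (s i * u) = z⁻¹ * u := by
        rw [mul_inv_rev, cs.inv_simple]
        calc z⁻¹ * s i * (s i * u) = z⁻¹ * (s i * s i) * u := by group
        _ = z⁻¹ * u := by rw [cs.simple_mul_simple_self]; group
      rw [hinv] at hIH
      omega

/-- Characterization of the (right) weak order via inversion sets. -/
theorem invSet_subset_iff (z u : W) :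
    invSet cs z ⊆ invSet cs u ↔ ℓ z + ℓ (z⁻¹ * u) = ℓ u := by
  constructor
  · exact fun h => invSet_subset_of_len cs (ℓ z) z u le_rfl h
  · intro h
    obtain ⟨ζ, hζred, hζ⟩ := cs.exists_reduced_word' z
    obtain ⟨γ, hγred, hγ⟩ := cs.exists_reduced_word' (z⁻¹ * u)
    have hπ : π (ζ ++ γ) = u := by
      rw [cs.wordProd_append, ← hζ, ← hγ]
      group
    have hlen : (ζ ++ γ).length = ℓ u := by
      rw [List.length_append, ← hζred, ← hγred, ← hζ, ← hγ, h]
    have hred : cs.IsReduced (ζ ++ γ) := by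
      unfold CoxeterSystem.IsReduced
      rw [hπ, hlen]
    intro t ht
    rw [← hπ, invSet_eq_lis cs hred]
    rw [hζ, invSet_eq_lis cs hζred] at ht
    have htake : lis ζ = (lis (ζ ++ γ)).take ζ.length := by
      conv_lhs => rw [← List.take_left (l₁ := ζ) (l₂ := γ)]
      exact cs.leftInvSeq_take _ _
    simp only [Set.mem_setOf_eq] at ht ⊢
    rw [htake] at ht
    exact List.take_subset _ _ ht

theorem length_le_of_invSet_subset {z u : W} (h : invSet cs z ⊆ invSet cs u) :
    ℓ z ≤ ℓ u := by
  have := (invSet_subset_iff cs z u).mp h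
  omega

theorem eq_of_invSet_subset_of_length_le {z u : W} (h : invSet cs z ⊆ invSet cs u)
    (hlen : ℓ u ≤ ℓ z) : z = u := by
  have hc := (invSet_subset_iff cs z u).mp h
  have : ℓ (z⁻¹ * u) = 0 := by omega
  have h1 : z⁻¹ * u = 1 := cs.length_eq_zero_iff.mp this
  calc z = z * (z⁻¹ * u) := by rw [h1, mul_one]
  _ = u := by group

/-- The lifting lemma: if `i` is a left descent of `u` but not of a lower bound `z`,
then `z` is below `s i * u`. -/
theorem invSet_subset_descent {i : B} {z u : W} (hzu : invSet cs z ⊆ invSet cs u)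
    (hu : ℓ (s i * u) < ℓ u) (hz : s i ∉ invSet cs z) :
    invSet cs z ⊆ invSet cs (s i * u) := by
  have hchar := (invSet_subset_iff cs z u).mp hzu
  obtain ⟨ζ, hζred, hζ⟩ := cs.exists_reduced_word' z
  obtain ⟨γ, hγred, hγ⟩ := cs.exists_reduced_word' (z⁻¹ * u)
  have hπ : π (ζ ++ γ) = u := by
    rw [cs.wordProd_append, ← hζ, ← hγ]
    group
  have hlen : (ζ ++ γ).length = ℓ u := by
    rw [List.length_append, ← hζred, ← hγred, ← hζ, ← hγ, hchar]
  have hred : cs.IsReduced (ζ ++ γ) := by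
    unfold CoxeterSystem.IsReduced
    rw [hπ, hlen]
  have hmem : s i ∈ lis (ζ ++ γ) := by
    have : s i ∈ invSet cs u := ⟨cs.isReflection_simple i, hu⟩
    rw [← hπ, invSet_eq_lis cs hred] at this
    exact this
  obtain ⟨j, hj, hjt⟩ := List.getElem_of_mem hmem
  rw [cs.length_leftInvSeq] at hj
  have hgetD : (lis (ζ ++ γ)).getD j 1 = s i := by
    rw [List.getD_eq_getElem?_getD,
      List.getElem?_eq_getElem (by rwa [cs.length_leftInvSeq])]
    simpa using hjt
  have hjge : ζ.length ≤ j := by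
    by_contra hlt
    push_neg at hlt
    have h1 : s i ∈ lis ζ := by
      have htake : lis ζ = (lis (ζ ++ γ)).take ζ.length := by
        conv_lhs => rw [← List.take_left (l₁ := ζ) (l₂ := γ)]
        exact cs.leftInvSeq_take _ _
      rw [htake]
      have hjlt2 : j < ((lis (ζ ++ γ)).take ζ.length).length := by
        rw [List.length_take, cs.length_leftInvSeq, List.length_append]
        omega
      have hget : ((lis (ζ ++ γ)).take ζ.length)[j]'hjlt2 = s i := by
        rw [List.getElem_take]
        exact hjt
      rw [← hget]
      exact List.getElem_mem hjlt2
    apply hz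
    rw [hζ, invSet_eq_lis cs hζred]
    exact h1
  have herase := cs.getD_leftInvSeq_mul_wordProd (ζ ++ γ) j
  rw [hgetD, hπ] at herase
  have herase2 : (ζ ++ γ).eraseIdx j = ζ ++ γ.eraseIdx (j - ζ.length) :=
    List.eraseIdx_append_of_length_le hjge γ
  rw [herase2] at herase
  have hlen2 : (ζ ++ γ.eraseIdx (j - ζ.length)).length = ℓ (s i * u) := by
    have hjlen : j - ζ.length < γ.length := by
      rw [List.length_append] at hj
      omega
    have hul : ℓ u = ℓ (s i * u) + 1 := by
      rcases cs.length_simple_mul u i with h1 | h1 <;> omega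
    rw [List.length_append, List.length_eraseIdx]
    simp only [hjlen, if_pos]
    rw [List.length_append] at hlen
    omega
  have hred2 : cs.IsReduced (ζ ++ γ.eraseIdx (j - ζ.length)) := by
    unfold CoxeterSystem.IsReduced
    rw [← herase, hlen2]
  intro t ht
  rw [herase, invSet_eq_lis cs hred2]
  rw [hζ, invSet_eq_lis cs hζred] at ht
  have htake : (lis (ζ ++ γ.eraseIdx (j - ζ.length))).take ζ.length
      = lis ζ := by
    rw [← cs.leftInvSeq_take _ ζ.length, List.take_left]
  simp only [Set.mem_setOf_eq] at ht ⊢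
  rw [← htake] at ht
  exact List.take_subset _ _ ht

/-! ### Bounded joins in the weak order -/

theorem invSet_simple_mul_of_not_mem {i : B} {v : W} (h : s i ∉ invSet cs v) :
    invSet cs (s i * v) = insert (s i) ((fun t => s i * t * s i) '' invSet cs v) := by
  have h' : ℓ (s i * (s i * v)) < ℓ (s i * v) := by
    rw [cs.simple_mul_simple_cancel_left]
    exact length_lt_of_not_simple_mem cs h
  have hd := invSet_descent cs h'
  rwa [cs.simple_mul_simple_cancel_left] at hd

private theorem join_aux : ∀ (n : ℕ) (w₁ w₂ p : W),
    2 * ℓ p + (ℓ p - ℓ w₁) + (ℓ p - ℓ w₂) ≤ n →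
    invSet cs w₁ ⊆ invSet cs p → invSet cs w₂ ⊆ invSet cs p →
    ∃ v : W, invSet cs w₁ ⊆ invSet cs v ∧ invSet cs w₂ ⊆ invSet cs v ∧
      ∀ q : W, invSet cs w₁ ⊆ invSet cs q → invSet cs w₂ ⊆ invSet cs q →
        invSet cs v ⊆ invSet cs q := by
  intro n
  induction n with
  | zero =>
    intro w₁ w₂ p hN h1 h2
    have hp0 : ℓ p = 0 := by omega
    have hp1 : p = 1 := cs.length_eq_zero_iff.mp hp0
    subst hp1
    rw [invSet_one] at h1
    have h1' : invSet cs w₁ = ∅ := Set.subset_empty_iff.mp h1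
    exact ⟨w₂, by rw [h1']; exact Set.empty_subset _, subset_rfl,
      fun q _ hq2 => hq2⟩
  | succ n ih =>
    intro w₁ w₂ p hN h1 h2
    by_cases h21 : invSet cs w₂ ⊆ invSet cs w₁
    · exact ⟨w₁, subset_rfl, h21, fun q hq1 _ => hq1⟩
    by_cases h12 : invSet cs w₁ ⊆ invSet cs w₂
    · exact ⟨w₂, h12, subset_rfl, fun q _ hq2 => hq2⟩
    have hw1ne : w₁ ≠ 1 := by
      rintro rfl
      exact h12 (by rw [invSet_one]; exact Set.empty_subset _)
    have hw2ne : w₂ ≠ 1 := by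
      rintro rfl
      exact h21 (by rw [invSet_one]; exact Set.empty_subset _)
    have hl1p : ℓ w₁ ≤ ℓ p := length_le_of_invSet_subset cs h1
    have hl2p : ℓ w₂ ≤ ℓ p := length_le_of_invSet_subset cs h2
    by_cases hcd : ∃ i, s i ∈ invSet cs w₁ ∧ s i ∈ invSet cs w₂
    · -- Case A : common left descent
      obtain ⟨i, hiw1, hiw2⟩ := hcd
      have hi1 : ℓ (s i * w₁) < ℓ w₁ := hiw1.2
      have hi2 : ℓ (s i * w₂) < ℓ w₂ := hiw2.2
      have hip : s i ∈ invSet cs p := h1 hiw1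
      have hipl : ℓ (s i * p) < ℓ p := hip.2
      have e1 : ℓ (s i * w₁) + 1 = ℓ w₁ := by
        rcases cs.length_simple_mul w₁ i with h | h <;> omega
      have e2 : ℓ (s i * w₂) + 1 = ℓ w₂ := by
        rcases cs.length_simple_mul w₂ i with h | h <;> omega
      have ep : ℓ (s i * p) + 1 = ℓ p := by
        rcases cs.length_simple_mul p i with h | h <;> omega
      have h1' : invSet cs (s i * w₁) ⊆ invSet cs (s i * p) :=
        invSet_descent_mono cs hi1 hipl h1
      have h2' : invSet cs (s i * w₂) ⊆ invSet cs (s i * p) :=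
        invSet_descent_mono cs hi2 hipl h2
      obtain ⟨v', hv1, hv2, hvmin⟩ := ih (s i * w₁) (s i * w₂) (s i * p)
        (by omega) h1' h2'
      have hsiv' : s i ∉ invSet cs v' := by
        intro hmem
        exact simple_not_mem_invSet_self cs hipl (hvmin _ h1' h2' hmem)
      have hvdesc : invSet cs (s i * v')
          = insert (s i) ((fun t => s i * t * s i) '' invSet cs v') :=
        invSet_simple_mul_of_not_mem cs hsiv'
      refine ⟨s i * v', ?_, ?_, ?_⟩
      · rw [invSet_descent cs hi1, hvdesc]
        exact Set.insert_subset_insert (Set.image_mono hv1)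
      · rw [invSet_descent cs hi2, hvdesc]
        exact Set.insert_subset_insert (Set.image_mono hv2)
      · intro q hq1 hq2
        have hiq : s i ∈ invSet cs q := hq1 hiw1
        have h1q : invSet cs (s i * w₁) ⊆ invSet cs (s i * q) :=
          invSet_descent_mono cs hi1 hiq.2 hq1
        have h2q : invSet cs (s i * w₂) ⊆ invSet cs (s i * q) :=
          invSet_descent_mono cs hi2 hiq.2 hq2
        rw [hvdesc, invSet_descent cs hiq.2]
        exact Set.insert_subset_insert (Set.image_mono (hvmin _ h1q h2q))
    · -- Case B : no common left descent
      push_neg at hcd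
      have key : ∀ u₁ u₂ : W, u₁ ≠ 1 →
          invSet cs u₁ ⊆ invSet cs p → invSet cs u₂ ⊆ invSet cs p →
          (∀ i : B, s i ∈ invSet cs u₁ → s i ∉ invSet cs u₂) →
          2 * ℓ p + (ℓ p - ℓ u₁) + (ℓ p - ℓ u₂) ≤ n + 1 →
          (∃ v : W, invSet cs u₁ ⊆ invSet cs v ∧ invSet cs u₂ ⊆ invSet cs v ∧
            ∀ q : W, invSet cs u₁ ⊆ invSet cs q → invSet cs u₂ ⊆ invSet cs q →
              invSet cs v ⊆ invSet cs q) ∨ (ℓ u₂ < ℓ u₁) := by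
        intro u₁ u₂ hu1ne hk1 hk2 hnocd hkN
        obtain ⟨i, hi0⟩ := cs.exists_leftDescent_of_ne_one hu1ne
        have hi : ℓ (s i * u₁) < ℓ u₁ := hi0
        have hiu1 : s i ∈ invSet cs u₁ := ⟨cs.isReflection_simple i, hi⟩
        have hiu2 : s i ∉ invSet cs u₂ := hnocd i hiu1
        have hip : s i ∈ invSet cs p := hk1 hiu1
        have hipl : ℓ (s i * p) < ℓ p := hip.2
        have hku1 : ℓ u₁ ≤ ℓ p := length_le_of_invSet_subset cs hk1
        have hku2 : ℓ u₂ ≤ ℓ p := length_le_of_invSet_subset cs hk2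
        have e1 : ℓ (s i * u₁) + 1 = ℓ u₁ := by
          rcases cs.length_simple_mul u₁ i with h | h <;> omega
        have ep : ℓ (s i * p) + 1 = ℓ p := by
          rcases cs.length_simple_mul p i with h | h <;> omega
        have h1' : invSet cs (s i * u₁) ⊆ invSet cs (s i * p) :=
          invSet_descent_mono cs hi hipl hk1
        have h2' : invSet cs u₂ ⊆ invSet cs (s i * p) :=
          invSet_subset_descent cs hk2 hipl hiu2
        have hku2' : ℓ u₂ ≤ ℓ (s i * p) := length_le_of_invSet_subset cs h2'
        obtain ⟨v', hv1, hv2, hvmin⟩ := ih (s i * u₁) u₂ (s i * p)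
          (by omega) h1' h2'
        have hsiv' : s i ∉ invSet cs v' := by
          intro hmem
          exact simple_not_mem_invSet_self cs hipl (hvmin _ h1' h2' hmem)
        have hvdesc : invSet cs (s i * v')
            = insert (s i) ((fun t => s i * t * s i) '' invSet cs v') :=
          invSet_simple_mul_of_not_mem cs hsiv'
        have hv1' : ℓ v' + 1 = ℓ (s i * v') := by
          have := length_lt_of_not_simple_mem cs hsiv'
          rcases cs.length_simple_mul v' i with h | h <;> omega
        have hw1v : invSet cs u₁ ⊆ invSet cs (s i * v') := by
          rw [invSet_descent cs hi, hvdesc]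
          exact Set.insert_subset_insert (Set.image_mono hv1)
        have hv₁min : ∀ q : W, invSet cs u₁ ⊆ invSet cs q →
            invSet cs u₂ ⊆ invSet cs q → invSet cs (s i * v') ⊆ invSet cs q := by
          intro q hq1 hq2
          have hiq : s i ∈ invSet cs q := hq1 hiu1
          have h1q : invSet cs (s i * u₁) ⊆ invSet cs (s i * q) :=
            invSet_descent_mono cs hi hiq.2 hq1
          have h2q : invSet cs u₂ ⊆ invSet cs (s i * q) :=
            invSet_subset_descent cs hq2 hiq.2 hiu2
          rw [hvdesc, invSet_descent cs hiq.2]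
          exact Set.insert_subset_insert (Set.image_mono (hvmin _ h1q h2q))
        by_cases hw2v : invSet cs u₂ ⊆ invSet cs (s i * v')
        · exact Or.inl ⟨s i * v', hw1v, hw2v, hv₁min⟩
        by_cases hgrow : ℓ u₁ < ℓ (s i * v')
        · -- replace u₁ by the strictly longer s i * v' and recurse
          have hvp : invSet cs (s i * v') ⊆ invSet cs p := hv₁min p hk1 hk2
          have hvpl : ℓ (s i * v') ≤ ℓ p := length_le_of_invSet_subset cs hvp
          obtain ⟨v, hva, hvb, hvm⟩ := ih (s i * v') u₂ p (by omega) hvp hk2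
          refine Or.inl ⟨v, hw1v.trans hva, hvb, ?_⟩
          intro q hq1 hq2
          exact hvm q (hv₁min q hq1 hq2) hq2
        · -- stall : then u₂ is strictly shorter than u₁
          push_neg at hgrow
          have hlv' : ℓ (s i * u₁) ≤ ℓ v' := length_le_of_invSet_subset cs hv1
          have heq : s i * u₁ = v' :=
            eq_of_invSet_subset_of_length_le cs hv1 (by omega)
          have : ℓ u₂ ≤ ℓ v' := length_le_of_invSet_subset cs hv2
          right
          omega
      rcases key w₁ w₂ hw1ne h1 h2 (fun i a b => hcd i a b) hN with hj | hst1
      · exact hj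
      rcases key w₂ w₁ hw2ne h2 h1 (fun i a b => hcd i b a) (by omega) with hj | hst2
      · obtain ⟨v, hva, hvb, hvm⟩ := hj
        exact ⟨v, hvb, hva, fun q hq1 hq2 => hvm q hq2 hq1⟩
      · omega

/-- Existence of least upper bounds for pairs bounded above in the weak order. -/
theorem exists_join {w₁ w₂ p : W} (h1 : invSet cs w₁ ⊆ invSet cs p)
    (h2 : invSet cs w₂ ⊆ invSet cs p) :
    ∃ v : W, invSet cs w₁ ⊆ invSet cs v ∧ invSet cs w₂ ⊆ invSet cs v ∧
      ∀ q : W, invSet cs w₁ ⊆ invSet cs q → invSet cs w₂ ⊆ invSet cs q →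
        invSet cs v ⊆ invSet cs q :=
  join_aux cs (2 * ℓ p + (ℓ p - ℓ w₁) + (ℓ p - ℓ w₂)) w₁ w₂ p le_rfl h1 h2

/-! ### Infinite reduced words -/

/-- The length-`n` prefix of an infinite word in the generators. -/
def prefixWord (ω : ℕ → B) (n : ℕ) : List B := List.ofFn fun i : Fin n => ω i

/-- `ω` is an infinite reduced expression: every finite prefix is reduced. -/
def IsInfRedExpr (cs : CoxeterSystem M W) (ω : ℕ → B) : Prop :=
  ∀ n, cs.IsReduced (prefixWord ω n)

/-- The elements of `W̄ = W ⊎ W_l`, represented as finite elements together with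
infinite reduced expressions (an infinite reduced word is an equivalence class of
infinite reduced expressions having the same inversion set). -/
def barInv (cs : CoxeterSystem M W) : W ⊕ {ω : ℕ → B // IsInfRedExpr cs ω} → Set W
  | .inl w => invSet cs w
  | .inr ω => ⋃ n, invSet cs (cs.wordProd (prefixWord ω.1 n))

@[simp] theorem prefixWord_length (ω : ℕ → B) (n : ℕ) : (prefixWord ω n).length = n := by
  simp [prefixWord]

theorem prefixWord_take (ω : ℕ → B) {m n : ℕ} (h : m ≤ n) :
    prefixWord ω m = (prefixWord ω n).take m := by
  apply List.ext_getElem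
  · simp [prefixWord]
    omega
  · intro i h1 h2
    rw [List.getElem_take]
    simp only [prefixWord]
    rw [List.getElem_ofFn, List.getElem_ofFn]

theorem invSet_prefixWord_mono {ω : ℕ → B} (hω : IsInfRedExpr cs ω) {m n : ℕ} (h : m ≤ n) :
    invSet cs (π (prefixWord ω m)) ⊆ invSet cs (π (prefixWord ω n)) := by
  rw [prefixWord_take ω h]
  exact invSet_take_subset cs (hω n) m

theorem ncard_le_length {w : W} {S : Set W} (hS : S.Finite) (h : S ⊆ invSet cs w) :
    S.ncard ≤ ℓ w := by
  have hc := card_le_of_subset_invSet cs (w := w) (T := hS.toFinset)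
    (by rwa [Set.Finite.coe_toFinset])
  rwa [Set.ncard_eq_toFinset_card _ hS]

private theorem exists_level {g : ℕ → Set W} (hmono : ∀ m n : ℕ, m ≤ n → g m ⊆ g n)
    {S : Set W} (hS : S.Finite) : S ⊆ (⋃ k, g k) → ∃ N, S ⊆ g N := by
  refine Set.Finite.induction_on (motive := fun S _ => S ⊆ (⋃ k, g k) → ∃ N, S ⊆ g N) S hS ?_ ?_
  · intro _
    exact ⟨0, Set.empty_subset _⟩
  · intro a T ha hTfin ih hsub
    obtain ⟨N1, hN1⟩ := ih ((Set.subset_insert a T).trans hsub)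
    obtain ⟨N2, hN2⟩ := Set.mem_iUnion.mp (hsub (Set.mem_insert a T))
    exact ⟨max N1 N2, Set.insert_subset (hmono N2 _ (le_max_right _ _) hN2)
      (hN1.trans (hmono N1 _ (le_max_left _ _)))⟩

private theorem exists_capture {F : Set W} (h1F : (1 : W) ∈ F)
    (hdir : ∀ x ∈ F, ∀ y ∈ F, ∃ z ∈ F, invSet cs x ⊆ invSet cs z ∧ invSet cs y ⊆ invSet cs z)
    {S : Set W} (hS : S.Finite) :
    S ⊆ (⋃ x ∈ F, invSet cs x) → ∃ z ∈ F, S ⊆ invSet cs z := by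
  refine Set.Finite.induction_on
    (motive := fun S _ => S ⊆ (⋃ x ∈ F, invSet cs x) → ∃ z ∈ F, S ⊆ invSet cs z) S hS ?_ ?_
  · intro _
    exact ⟨1, h1F, Set.empty_subset _⟩
  · intro a T ha hTfin ih hsub
    obtain ⟨z, hzF, hz⟩ := ih ((Set.subset_insert a T).trans hsub)
    have hamem := hsub (Set.mem_insert a T)
    rw [Set.mem_iUnion₂] at hamem
    obtain ⟨y, hyF, hay⟩ := hamem
    obtain ⟨z', hz'F, hyz', hzz'⟩ := hdir y hyF z hzF
    exact ⟨z', hz'F, Set.insert_subset (hyz' hay) (hz.trans hzz')⟩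

/-- From an increasing chain in the weak order with unbounded lengths, one can build an
infinite reduced expression whose inversion set is the union along the chain. -/
theorem exists_infword (c : ℕ → W) (h0 : c 0 = 1)
    (hmono : ∀ k, invSet cs (c k) ⊆ invSet cs (c (k + 1)))
    (hub : ∀ n : ℕ, ∃ k, n ≤ ℓ (c k)) :
    ∃ ψ : {ω : ℕ → B // IsInfRedExpr cs ω},
      (⋃ n, invSet cs (π (prefixWord ψ.1 n))) = ⋃ k, invSet cs (c k) := by
  classical
  have hstep : ∀ k : ℕ, ∃ δ : List B, cs.IsReduced δ ∧ (c k)⁻¹ * c (k + 1) = π δ :=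
    fun k => cs.exists_reduced_word' _
  choose D hDred hDeq using hstep
  let Wl : ℕ → List B := fun k => Nat.rec [] (fun k w => w ++ D k) k
  have hWl0 : Wl 0 = [] := rfl
  have hWls : ∀ k, Wl (k + 1) = Wl k ++ D k := fun k => rfl
  have hπW : ∀ k, π (Wl k) = c k := by
    intro k
    induction k with
    | zero => rw [hWl0, cs.wordProd_nil, h0]
    | succ k ih =>
      rw [hWls, cs.wordProd_append, ih, ← hDeq]
      group
  have hlen : ∀ k, (Wl k).length = ℓ (c k) := by
    intro k
    induction k with
    | zero =>
      rw [hWl0, h0]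
      simp
    | succ k ih =>
      have hchar := (invSet_subset_iff cs (c k) (c (k + 1))).mp (hmono k)
      have hD := hDred k
      unfold CoxeterSystem.IsReduced at hD
      rw [hWls, List.length_append, ih, ← hD, ← hDeq k]
      omega
  have hred : ∀ k, cs.IsReduced (Wl k) := by
    intro k
    unfold CoxeterSystem.IsReduced
    rw [hπW, hlen]
  have hpre : ∀ k k' : ℕ, k ≤ k' → Wl k <+: Wl k' := by
    intro k k' h
    induction k', h using Nat.le_induction with
    | base => exact List.prefix_refl _
    | succ n hn ih =>
      rw [hWls]
      exact ih.trans (List.prefix_append _ _)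
  choose K hK using hub
  have hKn : ∀ n : ℕ, n < (Wl (K (n + 1))).length := by
    intro n
    rw [hlen]
    have := hK (n + 1)
    omega
  set ω : ℕ → B := fun n => (Wl (K (n + 1)))[n]'(hKn n) with hω
  have hconsis : ∀ (k n : ℕ) (h : n < (Wl k).length), (Wl k)[n] = ω n := by
    intro k n h
    show (Wl k)[n] = (Wl (K (n + 1)))[n]'(hKn n)
    rcases le_total k (K (n + 1)) with hle | hle
    · exact (hpre k _ hle).getElem h
    · exact ((hpre _ k hle).getElem (hKn n)).symm
  have hprefix_eq : ∀ n k : ℕ, n ≤ (Wl k).length → prefixWord ω n = (Wl k).take n := by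
    intro n k h
    apply List.ext_getElem
    · rw [prefixWord_length, List.length_take]
      omega
    · intro i h1 h2
      rw [List.getElem_take]
      simp only [prefixWord]
      rw [List.getElem_ofFn]
      exact (hconsis k i (by rw [prefixWord_length] at h1; omega)).symm
  have hinf : IsInfRedExpr cs ω := by
    intro n
    have hn : n ≤ (Wl (K n)).length := by
      rw [hlen]
      exact hK n
    rw [hprefix_eq n (K n) hn]
    exact (hred (K n)).take n
  refine ⟨⟨ω, hinf⟩, ?_⟩
  apply Set.Subset.antisymm
  · apply Set.iUnion_subset
    intro n
    have hn : n ≤ (Wl (K n)).length := by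
      rw [hlen]
      exact hK n
    rw [hprefix_eq n (K n) hn]
    have h1 : invSet cs (π ((Wl (K n)).take n)) ⊆ invSet cs (π (Wl (K n))) :=
      invSet_take_subset cs (hred (K n)) n
    rw [hπW] at h1
    exact h1.trans (Set.subset_iUnion (fun k => invSet cs (c k)) (K n))
  · apply Set.iUnion_subset
    intro k
    have h2 : invSet cs (c k) = invSet cs (π (prefixWord ω ((Wl k).length))) := by
      rw [hprefix_eq _ k le_rfl, List.take_length, hπW]
    rw [h2]
    exact Set.subset_iUnion (fun n => invSet cs (π (prefixWord ω n))) ((Wl k).length)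

end CoxInf
open CoxInf in
/-- The set `W̄ = W ⊎ W_l` of group elements together with infinite reduced words of an
arbitrary Coxeter system `(W,S)`, partially ordered by the weak order
(`x ≤ y` iff `Φ_x ⊆ Φ_y`), is a complete meet semilattice: every nonempty subset of `W̄`
admits a greatest lower bound in `W̄`. -/
theorem infinite_reduced_words_complete_meet_semilattice
    {B : Type*} {W : Type*} [Group W] {M : CoxeterMatrix B} (cs : CoxeterSystem M W)
    (A : Set (W ⊕ {ω : ℕ → B // IsInfRedExpr cs ω})) (hA : A.Nonempty) :
    ∃ v : W ⊕ {ω : ℕ → B // IsInfRedExpr cs ω},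
      (∀ a ∈ A, barInv cs v ⊆ barInv cs a) ∧
      ∀ u : W ⊕ {ω : ℕ → B // IsInfRedExpr cs ω},
        (∀ a ∈ A, barInv cs u ⊆ barInv cs a) → barInv cs u ⊆ barInv cs v := by
  classical
  obtain ⟨a₀, ha₀⟩ := hA
  set F : Set W := {x | ∀ a ∈ A, invSet cs x ⊆ barInv cs a} with hFdef
  have h1F : (1 : W) ∈ F := by
    intro a ha
    rw [invSet_one]
    exact Set.empty_subset _
  have hbarmono : ∀ (ψ : {ω : ℕ → B // IsInfRedExpr cs ω}) (m n : ℕ), m ≤ n →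
      invSet cs (cs.wordProd (prefixWord ψ.1 m)) ⊆
        invSet cs (cs.wordProd (prefixWord ψ.1 n)) :=
    fun ψ m n h => invSet_prefixWord_mono cs ψ.2 h
  have hcub : ∀ a ∈ A, ∀ S : Set W, S.Finite → S ⊆ barInv cs a →
      ∃ p : W, S ⊆ invSet cs p ∧ invSet cs p ⊆ barInv cs a := by
    intro a _ S hSfin hS
    cases a with
    | inl w => exact ⟨w, hS, subset_rfl⟩
    | inr ψ =>
      obtain ⟨N, hN⟩ := exists_level (fun m n h => hbarmono ψ m n h) hSfin hS
      exact ⟨cs.wordProd (prefixWord ψ.1 N), hN,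
        Set.subset_iUnion (fun n => invSet cs (cs.wordProd (prefixWord ψ.1 n))) N⟩
  have hdir : ∀ x ∈ F, ∀ y ∈ F,
      ∃ z ∈ F, invSet cs x ⊆ invSet cs z ∧ invSet cs y ⊆ invSet cs z := by
    intro x hx y hy
    have hxy : invSet cs x ∪ invSet cs y ⊆ barInv cs a₀ :=
      Set.union_subset (hx a₀ ha₀) (hy a₀ ha₀)
    obtain ⟨p, hSp, -⟩ := hcub a₀ ha₀ _ ((invSet_finite cs x).union (invSet_finite cs y)) hxy
    have h1 : invSet cs x ⊆ invSet cs p := (Set.subset_union_left).trans hSp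
    have h2 : invSet cs y ⊆ invSet cs p := (Set.subset_union_right).trans hSp
    obtain ⟨v, hv1, hv2, hvmin⟩ := exists_join cs h1 h2
    refine ⟨v, ?_, hv1, hv2⟩
    intro a ha
    obtain ⟨q, hSq, hq⟩ := hcub a ha _ ((invSet_finite cs x).union (invSet_finite cs y))
      (Set.union_subset (hx a ha) (hy a ha))
    exact (hvmin q ((Set.subset_union_left).trans hSq)
      ((Set.subset_union_right).trans hSq)).trans hq
  set U : Set W := ⋃ x ∈ F, invSet cs x with hUdef
  have hUa : ∀ a ∈ A, U ⊆ barInv cs a := by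
    intro a ha
    apply Set.iUnion₂_subset
    intro x hx
    exact hx a ha
  have hlow : ∀ u : W ⊕ {ω : ℕ → B // IsInfRedExpr cs ω},
      (∀ a ∈ A, barInv cs u ⊆ barInv cs a) → barInv cs u ⊆ U := by
    intro u hu
    cases u with
    | inl x =>
      have hxF : x ∈ F := fun a ha => hu a ha
      rw [hUdef]
      exact Set.subset_iUnion₂ (s := fun (x : W) (_ : x ∈ F) => invSet cs x) x hxF
    | inr ψ =>
      apply Set.iUnion_subset
      intro n
      have hpF : cs.wordProd (prefixWord ψ.1 n) ∈ F := by
        intro a ha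
        exact (Set.subset_iUnion
          (fun m => invSet cs (cs.wordProd (prefixWord ψ.1 m))) n).trans (hu a ha)
      rw [hUdef]
      exact Set.subset_iUnion₂ (s := fun (x : W) (_ : x ∈ F) => invSet cs x) (cs.wordProd (prefixWord ψ.1 n)) hpF
  by_cases hcap : ∃ x ∈ F, U ⊆ invSet cs x
  · obtain ⟨x, hxF, hUx⟩ := hcap
    exact ⟨Sum.inl x, fun a ha => hxF a ha, fun u hu => (hlow u hu).trans hUx⟩
  · push_neg at hcap
    have hUinf : U.Infinite := by
      by_contra hfin
      rw [Set.not_infinite] at hfin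
      obtain ⟨z, hzF, hz⟩ := exists_capture cs h1F hdir hfin subset_rfl
      exact hcap z hzF hz
    have hUc : U.Countable := by
      refine Set.Countable.mono (hUa a₀ ha₀) ?_
      cases a₀ with
      | inl w => exact (invSet_finite cs w).countable
      | inr ψ => exact Set.countable_iUnion (fun n => (invSet_finite cs _).countable)
    obtain ⟨f, hfU⟩ := hUc.exists_eq_range hUinf.nonempty
    have hstep : ∀ x : W, x ∈ F → ∀ k : ℕ,
        ∃ z, z ∈ F ∧ invSet cs x ⊆ invSet cs z ∧ f k ∈ invSet cs z := by
      intro x hx k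
      have hfk : f k ∈ U := by rw [hfU]; exact Set.mem_range_self k
      rw [hUdef, Set.mem_iUnion₂] at hfk
      obtain ⟨y, hyF, hfy⟩ := hfk
      obtain ⟨z, hzF, hxz, hyz⟩ := hdir x hx y hyF
      exact ⟨z, hzF, hxz, hyz hfy⟩
    choose g hgF hgsub hgmem using hstep
    let c : ℕ → {x : W // x ∈ F} :=
      fun k => Nat.rec ⟨1, h1F⟩ (fun k p => ⟨g p.1 p.2 k, hgF p.1 p.2 k⟩) k
    have hc0 : (c 0).1 = 1 := rfl
    have hcmono : ∀ k, invSet cs (c k).1 ⊆ invSet cs (c (k + 1)).1 :=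
      fun k => hgsub (c k).1 (c k).2 k
    have hcf : ∀ k, f k ∈ invSet cs (c (k + 1)).1 := fun k => hgmem (c k).1 (c k).2 k
    have hcF : ∀ k, (c k).1 ∈ F := fun k => (c k).2
    have hUeq : U = ⋃ k, invSet cs (c k).1 := by
      apply Set.Subset.antisymm
      · rw [hfU]
        rintro - ⟨k, rfl⟩
        exact Set.mem_iUnion.mpr ⟨k + 1, hcf k⟩
      · rw [hUdef]
        exact Set.iUnion_subset fun k => Set.subset_iUnion₂ (s := fun (x : W) (_ : x ∈ F) => invSet cs x) (c k).1 (hcF k)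
    have hmono2 : ∀ m n : ℕ, m ≤ n → invSet cs (c m).1 ⊆ invSet cs (c n).1 := by
      intro m n h
      induction n, h using Nat.le_induction with
      | base => exact subset_rfl
      | succ n hn ih => exact ih.trans (hcmono n)
    have hub : ∀ n : ℕ, ∃ k, n ≤ cs.length (c k).1 := by
      intro n
      obtain ⟨T, hTU, hTfin, hTcard⟩ := hUinf.exists_subset_ncard_eq n
      rw [hUeq] at hTU
      obtain ⟨N, hN⟩ := exists_level hmono2 hTfin hTU
      exact ⟨N, by rw [← hTcard]; exact ncard_le_length cs hTfin hN⟩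
    obtain ⟨ψ, hψ⟩ := exists_infword cs (fun k => (c k).1) hc0 hcmono hub
    refine ⟨Sum.inr ψ, ?_, ?_⟩
    · intro a ha
      show (⋃ n, invSet cs (cs.wordProd (prefixWord ψ.1 n))) ⊆ barInv cs a
      rw [hψ, ← hUeq]
      exact hUa a ha
    · intro u hu
      show barInv cs u ⊆ ⋃ n, invSet cs (cs.wordProd (prefixWord ψ.1 n))
      rw [hψ, ← hUeq]
      exact hlow u hu
end

section
/- (Join Orthogonality Property) Let (W,S) be a Coxeter system and A ⊆ W̄ a subset admitting a join w in W̄ under the weak order. If v ∈ W̄ satisfies a ⊥ v for all a ∈ A, then w ⊥ v. -/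
open CoxeterSystem List

attribute [local instance] Classical.propDecidable

namespace CoxJop
variable {B W : Type*} [Group W] {M : CoxeterMatrix B} (cs : CoxeterSystem M W)

local prefix:100 "ℓ" => cs.length
local prefix:100 "π" => cs.wordProd
local prefix:100 "ris" => cs.rightInvSeq
local prefix:100 "lis" => cs.leftInvSeq

lemma simple_mul_eq_one_iff (i : B) (t : W) :
    cs.simple i * t = 1 ↔ t = cs.simple i := by
  rw [mul_eq_one_iff_inv_eq, eq_comm, cs.inv_simple]

lemma simple_conj_eq_self_iff (i : B) (t : W) :
    cs.simple i * t * cs.simple i = cs.simple i ↔ t = cs.simple i := by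
  constructor
  · intro h
    have h2 : t = (cs.simple i)⁻¹ * (cs.simple i * t * cs.simple i) * (cs.simple i)⁻¹ := by
      group
    rw [h] at h2
    simpa [cs.inv_simple, cs.simple_mul_simple_self] using h2
  · intro h
    rw [h, cs.simple_mul_simple_self, one_mul]

/-- The standard permutation representation on (reflection, sign) pairs. -/
noncomputable def sigma (i : B) : Equiv.Perm (W × ℤˣ) :=
  Function.Involutive.toPerm
    (fun p => (cs.simple i * p.1 * cs.simple i, if p.1 = cs.simple i then -p.2 else p.2))
    (by
      rintro ⟨t, e⟩
      have h1 : cs.simple i * (cs.simple i * t * cs.simple i) * cs.simple i = t := by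
        rw [← mul_assoc, ← mul_assoc, cs.simple_mul_simple_self, one_mul, mul_assoc,
          cs.simple_mul_simple_self, mul_one]
      by_cases h : t = cs.simple i
      · simp [h, simple_conj_eq_self_iff, simple_mul_eq_one_iff, cs.simple_mul_simple_self]
      · simp [h, h1, simple_conj_eq_self_iff, simple_mul_eq_one_iff])

lemma sigma_apply (i : B) (t : W) (e : ℤˣ) :
    sigma cs i (t, e) = (cs.simple i * t * cs.simple i, if t = cs.simple i then -e else e) := rfl

/-- Product of the permutations along a word. -/
noncomputable def listPerm (ω : List B) : Equiv.Perm (W × ℤˣ) := (ω.map (sigma cs)).prod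

@[simp] lemma listPerm_nil : listPerm cs ([] : List B) = 1 := rfl

lemma listPerm_cons (i : B) (ω : List B) :
    listPerm cs (i :: ω) = sigma cs i * listPerm cs ω := by
  simp [listPerm]

lemma listPerm_append (ω ω' : List B) :
    listPerm cs (ω ++ ω') = listPerm cs ω * listPerm cs ω' := by
  simp [listPerm]

lemma rightInvSeq_cons (i : B) (ω : List B) :
    ris (i :: ω) = ((π ω)⁻¹ * cs.simple i * π ω) :: ris ω := rfl

lemma listPerm_apply (ω : List B) (t : W) (e : ℤˣ) :
    listPerm cs ω (t, e) =
      (π ω * t * (π ω)⁻¹, e * (-1) ^ ((ris ω).count t)) := by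
  induction ω generalizing e with
  | nil => simp
  | cons i ω ih =>
      rw [listPerm_cons, Equiv.Perm.mul_apply, ih, sigma_apply, rightInvSeq_cons]
      have hcond : (π ω * t * (π ω)⁻¹ = cs.simple i) ↔ ((π ω)⁻¹ * cs.simple i * π ω = t) := by
        constructor
        · intro h; rw [← h]; group
        · intro h; rw [← h]; group
      have hπ : π (i :: ω) = cs.simple i * π ω := cs.wordProd_cons i ω
      by_cases h : (π ω)⁻¹ * cs.simple i * π ω = t
      · rw [if_pos (hcond.2 h), List.count_cons, if_pos (by exact beq_iff_eq.mpr h)]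
        refine Prod.ext ?_ ?_
        · show cs.simple i * (π ω * t * (π ω)⁻¹) * cs.simple i = π (i :: ω) * t * (π (i :: ω))⁻¹
          rw [hπ, mul_inv_rev, cs.inv_simple]; simp [mul_assoc]
        · show -(e * (-1) ^ ((ris ω).count t)) = e * (-1) ^ ((ris ω).count t + 1)
          rw [pow_succ, mul_neg_one, mul_neg]
      · rw [if_neg (fun hc => h (hcond.1 hc)), List.count_cons,
          if_neg (by exact fun hb => h (beq_iff_eq.mp hb))]
        refine Prod.ext ?_ ?_
        · show cs.simple i * (π ω * t * (π ω)⁻¹) * cs.simple i = π (i :: ω) * t * (π (i :: ω))⁻¹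
          rw [hπ, mul_inv_rev, cs.inv_simple]; simp [mul_assoc]
        · show e * (-1) ^ ((ris ω).count t) = e * (-1) ^ ((ris ω).count t + 0)
          rw [Nat.add_zero]
section PartB
variable {B W : Type*} [Group W] {M : CoxeterMatrix B} (cs : CoxeterSystem M W)

local prefix:100 "ℓ" => cs.length
local prefix:100 "π" => cs.wordProd
local prefix:100 "ris" => cs.rightInvSeq
local prefix:100 "lis" => cs.leftInvSeq

lemma alt_zero (i i' : B) : alternatingWord i i' 0 = [] := rfl
lemma alt_one (i i' : B) : alternatingWord i i' 1 = [i'] := rfl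

lemma alt_add_two (i i' : B) (m : ℕ) :
    alternatingWord i i' (m + 2) = alternatingWord i i' m ++ [i, i'] := by
  rw [alternatingWord_succ, alternatingWord_succ]
  simp [List.concat_eq_append, List.append_assoc]

lemma wordProd_alt_even (i i' : B) (a : ℕ) :
    π (alternatingWord i i' (2 * a)) = (cs.simple i * cs.simple i') ^ a := by
  induction a with
  | zero => simp [alt_zero]
  | succ a ih =>
      have : 2 * (a + 1) = 2 * a + 2 := by ring
      rw [this, alt_add_two, cs.wordProd_append, ih, pow_succ]
      simp [wordProd, List.map_cons, mul_assoc]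

lemma wordProd_alt_odd (i i' : B) (a : ℕ) :
    π (alternatingWord i i' (2 * a + 1)) = cs.simple i' * (cs.simple i * cs.simple i') ^ a := by
  induction a with
  | zero => simp [alt_one]
  | succ a ih =>
      have : 2 * (a + 1) + 1 = (2 * a + 1) + 2 := by ring
      rw [this, alt_add_two, cs.wordProd_append, ih, pow_succ]
      simp [wordProd, List.map_cons, mul_assoc]

lemma drop_alt (i i' : B) : ∀ (k n : ℕ),
    List.drop k (alternatingWord i i' n) = alternatingWord i i' (n - k) := by
  intro k
  induction k with
  | zero => simp
  | succ k ih =>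
      intro n
      cases n with
      | zero => simp [alt_zero]
      | succ n =>
          rw [alternatingWord_succ' i i' n, List.drop_succ_cons, ih n]
          congr 1
          omega

/-- `q * x^a = (x^a)⁻¹ * q` in the dihedral subgroup. -/
lemma simple_mul_pow (i i' : B) (a : ℕ) :
    cs.simple i' * (cs.simple i * cs.simple i') ^ a
      = ((cs.simple i * cs.simple i') ^ a)⁻¹ * cs.simple i' := by
  induction a with
  | zero => simp
  | succ a ih =>
      have hqp : cs.simple i' * cs.simple i = (cs.simple i * cs.simple i')⁻¹ := by
        rw [mul_inv_rev, cs.inv_simple, cs.inv_simple]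
      calc cs.simple i' * (cs.simple i * cs.simple i') ^ (a + 1)
          = (cs.simple i' * (cs.simple i * cs.simple i') ^ a) * (cs.simple i * cs.simple i') := by
            rw [pow_succ, mul_assoc]
        _ = ((cs.simple i * cs.simple i') ^ a)⁻¹ * (cs.simple i' * cs.simple i) * cs.simple i' := by
            rw [ih]; simp only [mul_assoc]
        _ = ((cs.simple i * cs.simple i') ^ a)⁻¹ * (cs.simple i * cs.simple i')⁻¹ * cs.simple i' := by
            rw [hqp]
        _ = (((cs.simple i * cs.simple i')) ^ (a+1))⁻¹ * cs.simple i' := by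
            rw [← mul_inv_rev, ← pow_succ']

/-- Uniform formula for successive quotients of alternating word products. -/
lemma alt_quot (i i' : B) (K : ℕ) :
    (π (alternatingWord i i' K))⁻¹ * π (alternatingWord i i' (K + 1))
      = ((cs.simple i * cs.simple i') ^ K)⁻¹ * cs.simple i' := by
  rcases Nat.even_or_odd K with ⟨a, ha⟩ | ⟨a, ha⟩
  · subst ha
    have h2 : a + a = 2 * a := by ring
    rw [h2, wordProd_alt_even, wordProd_alt_odd, simple_mul_pow, ← mul_assoc, ← mul_inv_rev,
      ← pow_add, h2]
  · subst ha
    have h2 : 2 * a + 1 + 1 = 2 * (a + 1) := by ring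
    rw [h2, wordProd_alt_even, wordProd_alt_odd]
    calc (cs.simple i' * (cs.simple i * cs.simple i') ^ a)⁻¹ * (cs.simple i * cs.simple i') ^ (a+1)
        = ((cs.simple i * cs.simple i') ^ a)⁻¹ *
            (cs.simple i' * (cs.simple i * cs.simple i') ^ (a+1)) := by
          rw [mul_inv_rev, cs.inv_simple, mul_assoc]
      _ = ((cs.simple i * cs.simple i') ^ a)⁻¹ *
            (((cs.simple i * cs.simple i') ^ (a+1))⁻¹ * cs.simple i') := by
          rw [simple_mul_pow]
      _ = (((cs.simple i * cs.simple i') ^ (a+1)) * (cs.simple i * cs.simple i') ^ a)⁻¹ *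
            cs.simple i' := by
          rw [mul_inv_rev, mul_assoc]
      _ = ((cs.simple i * cs.simple i') ^ (2 * a + 1))⁻¹ * cs.simple i' := by
          rw [← pow_add, show a + 1 + a = 2 * a + 1 from by omega]

/-- The entries of the right inversion sequence of an alternating word. -/
lemma ris_alt_entry (i i' : B) (n r : ℕ) (hr : r < n) :
    (ris (alternatingWord i i' n)).getD r 1
      = ((cs.simple i * cs.simple i') ^ (n - r - 1))⁻¹ * cs.simple i' := by
  have hlen : (alternatingWord i i' n).length = n := length_alternatingWord i i' n
  rw [cs.getD_rightInvSeq]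
  have hget : (alternatingWord i i' n)[r]? = some ((alternatingWord i i' n)[r]'(by omega)) := by
    exact List.getElem?_eq_getElem (by omega)
  rw [hget]
  simp only [Option.map_some, Option.getD_some]
  have hdrop1 : List.drop (r+1) (alternatingWord i i' n) = alternatingWord i i' (n - r - 1) := by
    rw [drop_alt]; congr 1
  have hdrop0 : List.drop r (alternatingWord i i' n) = alternatingWord i i' (n - r) :=
    drop_alt i i' r n
  have hcons : cs.simple ((alternatingWord i i' n)[r]'(by omega)) * π (List.drop (r+1) (alternatingWord i i' n))
      = π (List.drop r (alternatingWord i i' n)) := by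
    rw [← cs.wordProd_cons, List.getElem_cons_drop]
  rw [mul_assoc, hcons, hdrop0, hdrop1]
  obtain ⟨K, hK, hK1⟩ : ∃ K, n - r = K + 1 ∧ n - r - 1 = K := ⟨n - r - 1, by omega, rfl⟩
  rw [hK1, hK]
  exact alt_quot cs i i' K

lemma ris_alt_pairing (i i' : B) (m r : ℕ) (hr : r < m)
    (hx : (cs.simple i * cs.simple i') ^ m = 1) :
    (ris (alternatingWord i i' (2 * m))).getD r 1
      = (ris (alternatingWord i i' (2 * m))).getD (r + m) 1 := by
  rw [ris_alt_entry cs i i' (2*m) r (by omega), ris_alt_entry cs i i' (2*m) (r+m) (by omega)]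
  have h1 : 2 * m - r - 1 = (2 * m - (r + m) - 1) + m := by omega
  rw [h1, pow_add, hx, mul_one]

lemma ris_alt_drop_take (i i' : B) (m : ℕ)
    (hx : (cs.simple i * cs.simple i') ^ m = 1) :
    (ris (alternatingWord i i' (2 * m))).drop m
      = (ris (alternatingWord i i' (2 * m))).take m := by
  set l := ris (alternatingWord i i' (2 * m)) with hl
  have hlen : l.length = 2 * m := by
    rw [hl, cs.length_rightInvSeq, length_alternatingWord]
  apply List.ext_getElem
  · rw [List.length_drop, List.length_take, hlen]; omega
  · intro k h1 h2
    have hk1 : k < m := by rw [List.length_drop, hlen] at h1; omega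
    have hd : (l.drop m)[k]'h1 = l[m + k]'(by rw [hlen]; omega) := List.getElem_drop
    have ht : (l.take m)[k]'h2 = l[k]'(by rw [hlen]; omega) := List.getElem_take
    have hpair := ris_alt_pairing cs i i' m k hk1 hx
    rw [← hl] at hpair
    rw [hd, ht, ← List.getD_eq_getElem l 1, ← List.getD_eq_getElem l 1, Nat.add_comm m k]
    exact hpair.symm

lemma count_ris_alt_even (i i' : B) (m : ℕ)
    (hx : (cs.simple i * cs.simple i') ^ m = 1) (t : W) :
    Even ((ris (alternatingWord i i' (2 * m))).count t) := by
  set l := ris (alternatingWord i i' (2 * m)) with hl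
  have : l.count t = (l.take m).count t + (l.drop m).count t := by
    conv_lhs => rw [← List.take_append_drop m l]
    rw [List.count_append]
  rw [this, ris_alt_drop_take cs i i' m hx, ← hl]
  exact Even.add_self _

lemma listPerm_alt (i i' : B) (m : ℕ) :
    listPerm cs (alternatingWord i i' (2 * m)) = (sigma cs i * sigma cs i') ^ m := by
  induction m with
  | zero => simp [alt_zero]
  | succ m ih =>
      have h2 : 2 * (m + 1) = 2 * m + 2 := by ring
      rw [h2, alt_add_two, listPerm_append, ih, pow_succ]
      congr 1

lemma sigma_liftable : M.IsLiftable (sigma cs) := by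
  intro i i'
  rcases Nat.eq_zero_or_pos (M i i') with h0 | hpos
  · rw [h0, pow_zero]
  · have hx : (cs.simple i * cs.simple i') ^ (M i i') = 1 := cs.simple_mul_simple_pow i i'
    rw [← listPerm_alt]
    apply Equiv.ext
    rintro ⟨t, e⟩
    rw [listPerm_apply]
    have hπ : π (alternatingWord i i' (2 * M i i')) = 1 := by
      rw [wordProd_alt_even, hx]
    rw [hπ]
    have : (-1 : ℤˣ) ^ ((ris (alternatingWord i i' (2 * M i i'))).count t) = 1 :=
      Even.neg_one_pow (count_ris_alt_even cs i i' (M i i') hx t)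
    rw [this]
    simp

end PartB
section PartC
variable {B W : Type*} [Group W] {M : CoxeterMatrix B} (cs : CoxeterSystem M W)

local prefix:100 "ℓ" => cs.length
local prefix:100 "π" => cs.wordProd
local prefix:100 "ris" => cs.rightInvSeq
local prefix:100 "lis" => cs.leftInvSeq

noncomputable def phi : W →* Equiv.Perm (W × ℤˣ) := cs.lift ⟨sigma cs, sigma_liftable cs⟩

lemma phi_simple (i : B) : phi cs (cs.simple i) = sigma cs i := cs.lift_apply_simple _ i

lemma phi_wordProd (ω : List B) : phi cs (π ω) = listPerm cs ω := by
  induction ω with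
  | nil => rw [cs.wordProd_nil, map_one, listPerm_nil]
  | cons i ω ih => rw [cs.wordProd_cons, map_mul, phi_simple, listPerm_cons, ih]

noncomputable def eta (w t : W) : ℤˣ := (phi cs w (t, 1)).2

lemma eta_eq_count (ω : List B) (t : W) : eta cs (π ω) t = (-1) ^ ((ris ω).count t) := by
  unfold eta
  rw [phi_wordProd, listPerm_apply, one_mul]

lemma phi_apply (w t : W) (e : ℤˣ) : phi cs w (t, e) = (w * t * w⁻¹, e * eta cs w t) := by
  obtain ⟨ω, rfl⟩ := cs.wordProd_surjective w
  rw [phi_wordProd, listPerm_apply, eta_eq_count]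

lemma eta_mul (w v t : W) :
    eta cs (w * v) t = eta cs v t * eta cs w (v * t * v⁻¹) := by
  have h1 : phi cs (w * v) (t, 1) = phi cs w (phi cs v (t, 1)) := by
    rw [map_mul]; rfl
  rw [phi_apply, phi_apply, phi_apply, one_mul] at h1
  have := congrArg Prod.snd h1
  simpa using this

lemma eta_simple (i : B) (t : W) :
    eta cs (cs.simple i) t = if t = cs.simple i then -1 else 1 := by
  unfold eta
  rw [phi_simple, sigma_apply]

lemma eta_eq_one_or (w t : W) : eta cs w t = 1 ∨ eta cs w t = -1 := by
  obtain ⟨ω, rfl⟩ := cs.wordProd_surjective w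
  rw [eta_eq_count]
  rcases Nat.even_or_odd ((ris ω).count t) with h | h
  · left; exact h.neg_one_pow
  · right; exact h.neg_one_pow

lemma eta_refl : ∀ (n : ℕ) (u : W) (j : B), ℓ u = n →
    eta cs (u * cs.simple j * u⁻¹) (u * cs.simple j * u⁻¹) = -1 := by
  intro n
  induction n using Nat.strong_induction_on with
  | _ n ih =>
    intro u j hu
    rcases eq_or_ne u 1 with rfl | hne
    · simp only [one_mul, inv_one, mul_one]
      rw [eta_simple, if_pos rfl]
    · obtain ⟨i, hi⟩ := cs.exists_leftDescent_of_ne_one hne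
      have hulen : ℓ (cs.simple i * u) < n := hu ▸ hi
      have hufac : u = cs.simple i * (cs.simple i * u) := (cs.simple_mul_simple_cancel_left i).symm
      set u' := cs.simple i * u with hu'
      set t' := u' * cs.simple j * u'⁻¹ with ht'def
      have ht' : eta cs t' t' = -1 := ih (ℓ u') hulen u' j rfl
      have hT : u * cs.simple j * u⁻¹ = cs.simple i * (t' * cs.simple i) := by
        rw [ht'def, hufac]
        rw [mul_inv_rev, mul_inv_rev, cs.inv_simple]
        simp only [mul_assoc]
      rw [hT]
      set X := cs.simple i * (t' * cs.simple i) with hX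
      have e1 : eta cs X X
          = eta cs (t' * cs.simple i) X
            * eta cs (cs.simple i) ((t' * cs.simple i) * X * (t' * cs.simple i)⁻¹) := by
        rw [hX]; exact eta_mul cs (cs.simple i) (t' * cs.simple i) X
      have harg1 : (t' * cs.simple i) * X * (t' * cs.simple i)⁻¹ = t' := by
        rw [hX, mul_inv_rev, cs.inv_simple]
        simp only [mul_assoc, cs.simple_mul_simple_cancel_left]
        simp
      have e2 : eta cs (t' * cs.simple i) X
          = eta cs (cs.simple i) X
            * eta cs t' (cs.simple i * X * (cs.simple i)⁻¹) := by
        exact eta_mul cs t' (cs.simple i) X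
      have harg2 : cs.simple i * X * (cs.simple i)⁻¹ = t' := by
        rw [hX, cs.inv_simple]
        simp only [mul_assoc, cs.simple_mul_simple_cancel_left]
        simp [cs.simple_mul_simple_self]
      have hiff : (X = cs.simple i) ↔ (t' = cs.simple i) := by
        rw [hX, ← mul_assoc]
        exact simple_conj_eq_self_iff cs i t'
      rw [e1, harg1, e2, harg2, ht', eta_simple, eta_simple]
      by_cases h : t' = cs.simple i
      · rw [if_pos (hiff.mpr h), if_pos h]; decide
      · rw [if_neg (fun hc => h (hiff.mp hc)), if_neg h]; decide

lemma eta_self (t : W) (ht : cs.IsReflection t) : eta cs t t = -1 := by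
  obtain ⟨u, j, rfl⟩ := ht
  exact eta_refl cs (ℓ u) u j rfl

lemma length_mul_lt_of_eta_neg (w t : W) (h : eta cs w t = -1) : ℓ (w * t) < ℓ w := by
  obtain ⟨ω, hred, rfl⟩ := cs.exists_reduced_word' w
  rw [eta_eq_count] at h
  have hodd : Odd ((ris ω).count t) := by
    rcases Nat.even_or_odd ((ris ω).count t) with he | ho
    · exfalso
      rw [he.neg_one_pow] at h
      exact absurd h (by decide)
    · exact ho
  have hmem : t ∈ ris ω := List.count_pos_iff.mp (Nat.pos_of_ne_zero (by
    intro h0; rw [h0] at hodd; exact (Nat.not_odd_iff_even.mpr (Even.zero)) hodd))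
  obtain ⟨j, hj, hjt⟩ := List.getElem_of_mem hmem
  have hjlen : j < ω.length := by rwa [cs.length_rightInvSeq] at hj
  have hgetD : (ris ω).getD j 1 = t := by rw [List.getD_eq_getElem _ _ hj, hjt]
  have hprod : π ω * t = π (ω.eraseIdx j) := by
    rw [← hgetD]; exact cs.wordProd_mul_getD_rightInvSeq ω j
  have hlen : ℓ (π ω * t) ≤ (ω.eraseIdx j).length := hprod ▸ cs.length_wordProd_le _
  have herase : (ω.eraseIdx j).length = ω.length - 1 := by
    rw [List.length_eraseIdx]; simp [hjlen]
  rw [hred]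
  omega

lemma eta_neg_of_isRightInversion (w t : W) (ht : cs.IsRightInversion w t) :
    eta cs w t = -1 := by
  rcases eta_eq_one_or cs w t with h1 | h1
  · exfalso
    have hww : (w * t) * t = w := by
      rw [mul_assoc, ht.1.mul_self, mul_one]
    have harg : t * t * t⁻¹ = t := by rw [ht.1.mul_self, one_mul, ht.1.inv]
    have := eta_mul cs (w * t) t t
    rw [hww, harg, eta_self cs t ht.1, h1] at this
    have h2 : eta cs (w * t) t = -1 := by
      rcases eta_eq_one_or cs (w * t) t with h3 | h3
      · rw [h3] at this; exact absurd this.symm (by decide)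
      · exact h3
    have := length_mul_lt_of_eta_neg cs (w * t) t h2
    rw [hww] at this
    exact absurd ht.2 (by omega)
  · exact h1

/-- Strong exchange, right version. -/
lemma mem_rightInvSeq_of_isRightInversion {ω : List B} (hred : cs.IsReduced ω) {t : W}
    (ht : cs.IsRightInversion (π ω) t) : t ∈ ris ω := by
  have hη := eta_neg_of_isRightInversion cs (π ω) t ht
  rw [eta_eq_count] at hη
  apply List.count_pos_iff.mp
  apply Nat.pos_of_ne_zero
  intro h0
  rw [h0, pow_zero] at hη
  exact absurd hη (by decide)

/-- Strong exchange, left version. -/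
lemma mem_leftInvSeq_of_isLeftInversion {ω : List B} (hred : cs.IsReduced ω) {t : W}
    (ht : cs.IsLeftInversion (π ω) t) : t ∈ lis ω := by
  have hrev : cs.IsRightInversion (π ω.reverse) t := by
    rw [cs.wordProd_reverse]
    exact (cs.isRightInversion_inv_iff).mpr ht
  have hredrev : cs.IsReduced ω.reverse := (cs.isReduced_reverse_iff ω).mpr hred
  have := mem_rightInvSeq_of_isRightInversion cs hredrev hrev
  rw [cs.rightInvSeq_reverse] at this
  exact List.mem_reverse.mp this

end PartC
section PartD
open CoxInf
variable {B W : Type*} [Group W] {M : CoxeterMatrix B} (cs : CoxeterSystem M W)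

local prefix:100 "ℓ" => cs.length
local prefix:100 "π" => cs.wordProd
local prefix:100 "lis" => cs.leftInvSeq

/-- Conjugation by a simple reflection. -/
def conjS (i : B) (t : W) : W := cs.simple i * t * cs.simple i

lemma conjS_conjS (i : B) (t : W) : conjS cs i (conjS cs i t) = t := by
  simp only [conjS, mul_assoc, cs.simple_mul_simple_cancel_left]
  rw [cs.simple_mul_simple_self, mul_one]

lemma conjS_image_image (i : B) (S : Set W) : conjS cs i '' (conjS cs i '' S) = S := by
  rw [← Set.image_comp]
  convert Set.image_id S
  simp [conjS_conjS]

lemma conjS_eq_simple_iff (i : B) (t : W) : conjS cs i t = cs.simple i ↔ t = cs.simple i :=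
  simple_conj_eq_self_iff cs i t

lemma invSet_one : invSet cs (1 : W) = ∅ := by
  ext t
  simp only [invSet, Set.mem_setOf_eq, Set.mem_empty_iff_false, iff_false]
  rintro ⟨-, hlt⟩
  simp [mul_one] at hlt

lemma invSet_eq_lis {ω : List B} (hred : cs.IsReduced ω) :
    invSet cs (π ω) = {t | t ∈ lis ω} := by
  ext t
  constructor
  · intro ht
    exact mem_leftInvSeq_of_isLeftInversion cs hred ht
  · intro ht
    exact cs.isLeftInversion_of_mem_leftInvSeq hred ht

lemma invSet_finite (x : W) : (invSet cs x).Finite := by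
  obtain ⟨ω, hred, rfl⟩ := cs.exists_reduced_word' x
  rw [invSet_eq_lis cs hred]
  exact (lis ω).finite_toSet

lemma simple_mem_invSet_iff (i : B) (x : W) :
    cs.simple i ∈ invSet cs x ↔ ℓ (cs.simple i * x) < ℓ x := by
  constructor
  · exact fun h => h.2
  · exact fun h => ⟨cs.isReflection_simple i, h⟩

lemma length_simple_mul_asc {i : B} {x : W} (h : cs.simple i ∉ invSet cs x) :
    ℓ (cs.simple i * x) = ℓ x + 1 := by
  rcases cs.length_simple_mul x i with heq | heq
  · exact heq
  · exfalso
    exact h ⟨cs.isReflection_simple i, by omega⟩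

lemma length_simple_mul_desc {i : B} {x : W} (h : cs.simple i ∈ invSet cs x) :
    ℓ (cs.simple i * x) + 1 = ℓ x := by
  rcases cs.length_simple_mul x i with heq | heq
  · exfalso; have := h.2; omega
  · exact heq

lemma invSet_simple_mul_of_asc {i : B} {x : W} (h : ℓ (cs.simple i * x) = ℓ x + 1) :
    invSet cs (cs.simple i * x) = insert (cs.simple i) (conjS cs i '' invSet cs x) := by
  obtain ⟨ω, hred, rfl⟩ := cs.exists_reduced_word' x
  have hred2 : cs.IsReduced (i :: ω) := by
    unfold CoxeterSystem.IsReduced at hred ⊢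
    rw [cs.wordProd_cons, h, hred, List.length_cons]
  rw [← cs.wordProd_cons, invSet_eq_lis cs hred2, invSet_eq_lis cs hred]
  ext t
  have hlis : lis (i :: ω) = cs.simple i :: List.map (MulAut.conj (cs.simple i)) (lis ω) := rfl
  rw [hlis]
  simp only [Set.mem_setOf_eq, List.mem_cons, List.mem_map, Set.mem_insert_iff,
    Set.mem_image]
  constructor
  · rintro (h1 | ⟨a, ha, rfl⟩)
    · exact Or.inl h1
    · refine Or.inr ⟨a, ha, ?_⟩
      show cs.simple i * a * cs.simple i = _
      rw [MulAut.conj_apply, cs.inv_simple]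
  · rintro (h1 | ⟨a, ha, rfl⟩)
    · exact Or.inl h1
    · refine Or.inr ⟨a, ha, ?_⟩
      rw [MulAut.conj_apply, cs.inv_simple]
      rfl

lemma simple_not_mem_conjS_image {i : B} {x : W} (h : cs.simple i ∉ invSet cs x) :
    cs.simple i ∉ conjS cs i '' invSet cs x := by
  rintro ⟨t, ht, hconj⟩
  rw [conjS_eq_simple_iff] at hconj
  exact h (hconj ▸ ht)

lemma invSet_simple_mul_of_desc {i : B} {x : W} (h : ℓ (cs.simple i * x) + 1 = ℓ x) :
    invSet cs (cs.simple i * x) = conjS cs i '' (invSet cs x \ {cs.simple i}) := by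
  have hxx : cs.simple i * (cs.simple i * x) = x := cs.simple_mul_simple_cancel_left i
  have hasc : ℓ (cs.simple i * (cs.simple i * x)) = ℓ (cs.simple i * x) + 1 := by
    rw [hxx]; omega
  have hinv : invSet cs x = insert (cs.simple i) (conjS cs i '' invSet cs (cs.simple i * x)) := by
    conv_lhs => rw [← hxx]
    exact invSet_simple_mul_of_asc cs hasc
  have hnot : cs.simple i ∉ invSet cs (cs.simple i * x) := by
    intro hc
    have := hc.2
    omega
  have hdiff : invSet cs x \ {cs.simple i} = conjS cs i '' invSet cs (cs.simple i * x) := by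
    rw [hinv, Set.insert_diff_of_mem _ (Set.mem_singleton _), Set.diff_singleton_eq_self
      (simple_not_mem_conjS_image cs hnot)]
  rw [hdiff, conjS_image_image]

lemma invSet_subset_mul {x z : W} (h : ℓ (x * z) = ℓ x + ℓ z) :
    invSet cs x ⊆ invSet cs (x * z) := by
  rintro t ⟨hrefl, hlt⟩
  refine ⟨hrefl, ?_⟩
  have h1 : ℓ (t * x * z) ≤ ℓ (t * x) + ℓ z := cs.length_mul_le _ _
  rw [← mul_assoc]
  omega

end PartD
section PartD2
open CoxInf
variable {B W : Type*} [Group W] {M : CoxeterMatrix B} (cs : CoxeterSystem M W)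

local prefix:100 "ℓ" => cs.length

lemma invSet_mul_subset : ∀ (n : ℕ) (a z : W), ℓ a = n → ℓ (a * z) = ℓ a + ℓ z →
    invSet cs (a * z) ⊆ invSet cs a ∪ (fun t => a * t * a⁻¹) '' invSet cs z := by
  intro n
  induction n using Nat.strong_induction_on with
  | _ n ih =>
    intro a z hn hlen
    rcases eq_or_ne a 1 with rfl | hne
    · intro t ht
      right
      refine ⟨t, by simpa using ht, by simp⟩
    · obtain ⟨i, hi⟩ := cs.exists_leftDescent_of_ne_one hne
      have hafac : cs.simple i * (cs.simple i * a) = a := cs.simple_mul_simple_cancel_left i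
      set a' := cs.simple i * a with ha'
      have hlena' : ℓ a' + 1 = ℓ a := by
        rw [ha']
        exact length_simple_mul_desc cs ⟨cs.isReflection_simple i, hi⟩
      have hlenaz' : ℓ (a' * z) = ℓ a' + ℓ z := by
        have h1 : ℓ (a' * z) ≤ ℓ a' + ℓ z := cs.length_mul_le _ _
        have h2 : ℓ (a * z) ≤ 1 + ℓ (a' * z) := by
          have := cs.length_mul_le (cs.simple i) (a' * z)
          rw [← mul_assoc, hafac] at this
          simpa [cs.length_simple] using this
        omega
      have hlensz : ℓ (cs.simple i * (a' * z)) = ℓ (a' * z) + 1 := by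
        rw [← mul_assoc, hafac]
        omega
      have hsub1 : invSet cs (a * z) ⊆
          insert (cs.simple i) (conjS cs i '' invSet cs (a' * z)) := by
        have : invSet cs (cs.simple i * (a' * z))
            = insert (cs.simple i) (conjS cs i '' invSet cs (a' * z)) :=
          invSet_simple_mul_of_asc cs hlensz
        rw [← mul_assoc, hafac] at this
        rw [this]
      have hsub2 : invSet cs (a' * z) ⊆ invSet cs a' ∪ (fun t => a' * t * a'⁻¹) '' invSet cs z :=
        ih (ℓ a') (by omega) a' z rfl hlenaz'
      have hinva : invSet cs a = insert (cs.simple i) (conjS cs i '' invSet cs a') := by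
        conv_lhs => rw [← hafac]
        exact invSet_simple_mul_of_asc cs (by rw [hafac]; omega)
      intro t ht
      rcases hsub1 ht with rfl | ⟨t1, ht1, rfl⟩
      · left
        rw [hinva]
        exact Set.mem_insert _ _
      · rcases hsub2 ht1 with h1 | ⟨t2, ht2, rfl⟩
        · left
          rw [hinva]
          exact Set.mem_insert_of_mem _ ⟨t1, h1, rfl⟩
        · right
          refine ⟨t2, ht2, ?_⟩
          show a * t2 * a⁻¹ = conjS cs i (a' * t2 * a'⁻¹)
          unfold conjS
          conv_lhs => rw [← hafac]
          rw [mul_inv_rev, mul_inv_rev, cs.inv_simple]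
          simp only [mul_assoc]

lemma invSet_subset_length : ∀ (n : ℕ) (a w : W), ℓ a = n → invSet cs a ⊆ invSet cs w →
    ℓ a + ℓ (a⁻¹ * w) = ℓ w := by
  intro n
  induction n using Nat.strong_induction_on with
  | _ n ih =>
    intro a w hn hsub
    rcases eq_or_ne a 1 with rfl | hne
    · simp
    · obtain ⟨i, hi⟩ := cs.exists_leftDescent_of_ne_one hne
      have hsa : cs.simple i ∈ invSet cs a := ⟨cs.isReflection_simple i, hi⟩
      have hsw : cs.simple i ∈ invSet cs w := hsub hsa
      have hda := length_simple_mul_desc cs hsa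
      have hdw := length_simple_mul_desc cs hsw
      have hsub' : invSet cs (cs.simple i * a) ⊆ invSet cs (cs.simple i * w) := by
        rw [invSet_simple_mul_of_desc cs hda, invSet_simple_mul_of_desc cs hdw]
        exact Set.image_mono (Set.diff_subset_diff_left hsub)
      have hIH := ih (ℓ (cs.simple i * a)) (by omega) (cs.simple i * a) (cs.simple i * w)
        rfl hsub'
      have hcancel : (cs.simple i * a)⁻¹ * (cs.simple i * w) = a⁻¹ * w := by
        rw [mul_inv_rev, cs.inv_simple]
        simp only [mul_assoc, cs.simple_mul_simple_cancel_left]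
      rw [hcancel] at hIH
      omega

lemma invSet_subset_simple_mul {a w : W} {i : B} (hsub : invSet cs a ⊆ invSet cs w)
    (hna : cs.simple i ∉ invSet cs a) (hw : cs.simple i ∈ invSet cs w) :
    invSet cs a ⊆ invSet cs (cs.simple i * w) := by
  have hlen := invSet_subset_length cs (ℓ a) a w rfl hsub
  have hwfac : a * (a⁻¹ * w) = w := by simp [mul_assoc]
  have hmullen : ℓ (a * (a⁻¹ * w)) = ℓ a + ℓ (a⁻¹ * w) := by rw [hwfac]; omega
  have hsiw : cs.simple i ∈ invSet cs (a * (a⁻¹ * w)) := by rw [hwfac]; exact hw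
  rcases invSet_mul_subset cs (ℓ a) a (a⁻¹ * w) rfl hmullen hsiw with h | ⟨t0, ht0, hconj⟩
  · exact absurd h hna
  · have hd : ℓ (t0 * (a⁻¹ * w)) < ℓ (a⁻¹ * w) := ht0.2
    have hsw : cs.simple i * w = a * (t0 * (a⁻¹ * w)) := by
      rw [← hconj]
      simp only [mul_assoc]
    have hlsw : ℓ (cs.simple i * w) + 1 = ℓ w := length_simple_mul_desc cs hw
    have hub : ℓ (a * (t0 * (a⁻¹ * w))) ≤ ℓ a + ℓ (t0 * (a⁻¹ * w)) := cs.length_mul_le _ _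
    have hlAD : ℓ (a * (t0 * (a⁻¹ * w))) = ℓ (cs.simple i * w) := by rw [← hsw]
    have hadlen : ℓ (a * (t0 * (a⁻¹ * w))) = ℓ a + ℓ (t0 * (a⁻¹ * w)) := by
      omega
    have := invSet_subset_mul cs hadlen
    rwa [← hsw] at this

end PartD2
section PartE
open CoxInf
variable {B W : Type*} [Group W] {M : CoxeterMatrix B} (cs : CoxeterSystem M W)

local prefix:100 "ℓ" => cs.length
local prefix:100 "π" => cs.wordProd

lemma length_prefixWord (ω : ℕ → B) (n : ℕ) : (prefixWord ω n).length = n := by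
  simp [prefixWord]

lemma prefixWord_succ (ω : ℕ → B) (n : ℕ) :
    prefixWord ω (n + 1) = prefixWord ω n ++ [ω n] := by
  unfold prefixWord
  rw [List.ofFn_succ']
  simp [List.concat_eq_append, Fin.last]

lemma prefixWord_zero (ω : ℕ → B) : prefixWord ω 0 = [] := rfl

lemma wordProd_prefixWord_succ (ω : ℕ → B) (n : ℕ) :
    π (prefixWord ω (n + 1)) = π (prefixWord ω n) * cs.simple (ω n) := by
  rw [prefixWord_succ, cs.wordProd_append, cs.wordProd_singleton]

lemma length_prefix_of_inf {ω : ℕ → B} (h : IsInfRedExpr cs ω) (n : ℕ) :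
    ℓ (π (prefixWord ω n)) = n := by
  have := h n
  unfold CoxeterSystem.IsReduced at this
  rw [this, length_prefixWord]

lemma invSet_prefix_mono {ω : ℕ → B} (h : IsInfRedExpr cs ω) {m n : ℕ} (hmn : m ≤ n) :
    invSet cs (π (prefixWord ω m)) ⊆ invSet cs (π (prefixWord ω n)) := by
  induction n, hmn using Nat.le_induction with
  | base => exact le_refl _
  | succ n hmn ih =>
      refine ih.trans ?_
      have hlen : ℓ (π (prefixWord ω n) * cs.simple (ω n))
          = ℓ (π (prefixWord ω n)) + ℓ (cs.simple (ω n)) := by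
        rw [← wordProd_prefixWord_succ cs, length_prefix_of_inf cs h,
          length_prefix_of_inf cs h, cs.length_simple]
      have := invSet_subset_mul cs hlen
      rwa [← wordProd_prefixWord_succ cs] at this

lemma barInv_inl (x : W) : barInv cs (Sum.inl x) = invSet cs x := rfl

lemma barInv_inr (ω : {ω : ℕ → B // IsInfRedExpr cs ω}) :
    barInv cs (Sum.inr ω) = ⋃ n, invSet cs (π (prefixWord ω.1 n)) := rfl

lemma list_absorb (T : ℕ → Set W) (hmono : ∀ m n : ℕ, m ≤ n → T m ⊆ T n) :
    ∀ (l : List W), (∀ t ∈ l, ∃ n, t ∈ T n) → ∃ N, ∀ t ∈ l, t ∈ T N := by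
  intro l
  induction l with
  | nil => exact fun _ => ⟨0, by simp⟩
  | cons a l ih =>
      intro hl
      obtain ⟨n, hn⟩ := hl a List.mem_cons_self
      obtain ⟨N, hN⟩ := ih (fun t ht => hl t (List.mem_cons_of_mem a ht))
      refine ⟨max n N, ?_⟩
      intro t ht
      rcases List.mem_cons.mp ht with rfl | ht'
      · exact hmono n _ (le_max_left n N) hn
      · exact hmono N _ (le_max_right n N) (hN t ht')

lemma invSet_absorb {a : W} (T : ℕ → Set W) (hmono : ∀ m n : ℕ, m ≤ n → T m ⊆ T n)
    (hsub : invSet cs a ⊆ ⋃ n, T n) : ∃ N, invSet cs a ⊆ T N := by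
  obtain ⟨ωa, hred, rfl⟩ := cs.exists_reduced_word' a
  obtain ⟨N, hN⟩ := list_absorb T hmono (cs.leftInvSeq ωa) (by
    intro t ht
    have : t ∈ invSet cs (π ωa) := by
      rw [invSet_eq_lis cs hred]; exact ht
    exact Set.mem_iUnion.mp (hsub this))
  refine ⟨N, ?_⟩
  intro t ht
  rw [invSet_eq_lis cs hred] at ht
  exact hN t ht

lemma iUnion_cofinal (T : ℕ → Set W) (hmono : ∀ m n : ℕ, m ≤ n → T m ⊆ T n) (N : ℕ) :
    (⋃ n, T n) = ⋃ j, T (N + j) := by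
  ext t
  simp only [Set.mem_iUnion]
  constructor
  · rintro ⟨n, hn⟩
    exact ⟨n, hmono n (N + n) (by omega) hn⟩
  · rintro ⟨j, hj⟩
    exact ⟨N + j, hj⟩

/-- Prepending a simple reflection to an element of `W̄` not having it as an inversion. -/
lemma exists_prepend (w : W ⊕ {ω : ℕ → B // IsInfRedExpr cs ω}) (i : B)
    (h : cs.simple i ∉ barInv cs w) :
    ∃ w', barInv cs w' = insert (cs.simple i) (conjS cs i '' barInv cs w) := by
  cases w with
  | inl x =>
      refine ⟨Sum.inl (cs.simple i * x), ?_⟩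
      rw [barInv_inl, barInv_inl]
      exact invSet_simple_mul_of_asc cs (length_simple_mul_asc cs h)
  | inr ω =>
      obtain ⟨ω, hred⟩ := ω
      have hnot : ∀ n, cs.simple i ∉ invSet cs (π (prefixWord ω n)) := by
        intro n hc
        exact h (Set.mem_iUnion.mpr ⟨n, hc⟩)
      set ω' : ℕ → B := fun k => Nat.casesOn k i ω with hω'
      have hpw : ∀ n, prefixWord ω' (n + 1) = i :: prefixWord ω n := by
        intro n
        induction n with
        | zero => rfl
        | succ n ih =>
            rw [prefixWord_succ, ih, prefixWord_succ]
            rfl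
      have hprod : ∀ n, π (prefixWord ω' (n + 1)) = cs.simple i * π (prefixWord ω n) := by
        intro n
        rw [hpw n, cs.wordProd_cons]
      have hred' : IsInfRedExpr cs ω' := by
        intro m
        cases m with
        | zero => simp [CoxeterSystem.IsReduced, prefixWord_zero]
        | succ n =>
            unfold CoxeterSystem.IsReduced
            rw [hprod n, length_prefixWord, length_simple_mul_asc cs (hnot n),
              length_prefix_of_inf cs hred]
      refine ⟨Sum.inr ⟨ω', hred'⟩, ?_⟩
      rw [barInv_inr, barInv_inr]
      ext t
      simp only [Set.mem_iUnion]
      constructor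
      · rintro ⟨m, hm⟩
        cases m with
        | zero =>
            exfalso
            rw [prefixWord_zero, cs.wordProd_nil, invSet_one] at hm
            exact hm
        | succ n =>
            rw [hprod n, invSet_simple_mul_of_asc cs
              (length_simple_mul_asc cs (hnot n))] at hm
            rcases hm with rfl | ⟨t1, ht1, rfl⟩
            · exact Set.mem_insert _ _
            · exact Set.mem_insert_of_mem _ ⟨t1, Set.mem_iUnion.mpr ⟨n, ht1⟩, rfl⟩
      · rintro (rfl | ⟨t1, ht1, rfl⟩)
        · refine ⟨1, ?_⟩
          rw [hprod 0, invSet_simple_mul_of_asc cs (length_simple_mul_asc cs (hnot 0))]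
          exact Set.mem_insert _ _
        · obtain ⟨n, hn⟩ := Set.mem_iUnion.mp ht1
          refine ⟨n + 1, ?_⟩
          rw [hprod n, invSet_simple_mul_of_asc cs (length_simple_mul_asc cs (hnot n))]
          exact Set.mem_insert_of_mem _ ⟨t1, hn, rfl⟩

/-- Deleting a simple reflection from an element of `W̄` having it as an inversion. -/
lemma exists_delete (w : W ⊕ {ω : ℕ → B // IsInfRedExpr cs ω}) (i : B)
    (h : cs.simple i ∈ barInv cs w) :
    ∃ w', barInv cs w' = conjS cs i '' (barInv cs w \ {cs.simple i}) := by
  cases w with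
  | inl x =>
      refine ⟨Sum.inl (cs.simple i * x), ?_⟩
      rw [barInv_inl, barInv_inl]
      exact invSet_simple_mul_of_desc cs (length_simple_mul_desc cs h)
  | inr ω =>
      obtain ⟨ω, hred⟩ := ω
      set T : ℕ → Set W := fun n => invSet cs (π (prefixWord ω n)) with hT
      have hmono : ∀ m n : ℕ, m ≤ n → T m ⊆ T n := fun m n hmn =>
        invSet_prefix_mono cs hred hmn
      obtain ⟨N0, hN0⟩ := Set.mem_iUnion.mp h
      obtain ⟨N, hNeq⟩ : ∃ N, N = N0 + 1 := ⟨N0 + 1, rfl⟩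
      have hN : ∀ n, N ≤ n → cs.simple i ∈ T n := by
        intro n hn
        exact hmono N0 n (by omega) hN0
      have hNpos : 1 ≤ N := by omega
      -- lengths
      have hdesc : ∀ n, N ≤ n → ℓ (cs.simple i * π (prefixWord ω n)) + 1 = n := by
        intro n hn
        have := length_simple_mul_desc cs (hN n hn)
        rwa [length_prefix_of_inf cs hred] at this
      -- reduced word for the deleted prefix
      obtain ⟨ρ, hρred, hρ⟩ := cs.exists_reduced_word' (cs.simple i * π (prefixWord ω N))
      have hρlen : ρ.length = N - 1 := by
        have h1 := hdesc N (le_refl N)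
        unfold CoxeterSystem.IsReduced at hρred
        rw [← hρ] at hρred
        omega
      -- the shifted infinite word
      set τ : ℕ → B := fun k => if k < N - 1 then ρ.getD k i else ω (k + 1) with hτ
      have hc1 : ∀ m, m ≤ N - 1 → prefixWord τ m = ρ.take m := by
        intro m hm
        apply List.ext_getElem
        · rw [length_prefixWord, List.length_take]
          omega
        · intro k hk1 hk2
          rw [length_prefixWord] at hk1
          have hkρ : k < ρ.length := by omega
          have h1 : (prefixWord τ m)[k] = τ k := by
            simp [prefixWord]
          rw [h1, List.getElem_take]
          rw [hτ]
          simp only [if_pos (show k < N - 1 by omega)]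
          exact List.getD_eq_getElem ρ i hkρ
      have hc2 : prefixWord τ (N - 1) = ρ := by
        rw [hc1 (N - 1) (le_refl _), ← hρlen, List.take_length]
      have hc3 : ∀ j, π (prefixWord τ (N - 1 + j)) = cs.simple i * π (prefixWord ω (N + j)) := by
        intro j
        induction j with
        | zero => rw [Nat.add_zero, hc2, ← hρ, Nat.add_zero]
        | succ j ih =>
            have harg : τ (N - 1 + j) = ω (N + j) := by
              rw [hτ]
              simp only [if_neg (show ¬ (N - 1 + j < N - 1) by omega)]
              congr 1
              omega
            rw [show N - 1 + (j + 1) = (N - 1 + j) + 1 from by omega,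
              wordProd_prefixWord_succ, ih, harg, mul_assoc,
              ← wordProd_prefixWord_succ, show N + j + 1 = N + (j + 1) from rfl]
      have hc4 : IsInfRedExpr cs τ := by
        intro m
        rcases le_or_gt m (N - 1) with hm | hm
        · rw [hc1 m hm]
          exact hρred.take m
        · obtain ⟨j, rfl⟩ : ∃ j, m = N - 1 + j := ⟨m - (N - 1), by omega⟩
          unfold CoxeterSystem.IsReduced
          rw [hc3 j, length_prefixWord]
          have := hdesc (N + j) (by omega)
          omega
      refine ⟨Sum.inr ⟨τ, hc4⟩, ?_⟩
      rw [barInv_inr, barInv_inr]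
      have hmonoτ : ∀ m n : ℕ, m ≤ n →
          invSet cs (π (prefixWord τ m)) ⊆ invSet cs (π (prefixWord τ n)) := fun m n hmn =>
        invSet_prefix_mono cs hc4 hmn
      rw [iUnion_cofinal _ hmonoτ (N - 1), iUnion_cofinal _ hmono N]
      have hterm : ∀ j, invSet cs (π (prefixWord τ (N - 1 + j)))
          = conjS cs i '' (T (N + j) \ {cs.simple i}) := by
        intro j
        rw [hc3 j]
        have hd : ℓ (cs.simple i * π (prefixWord ω (N + j))) + 1 = ℓ (π (prefixWord ω (N + j))) := by
          rw [length_prefix_of_inf cs hred]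
          exact hdesc (N + j) (by omega)
        exact invSet_simple_mul_of_desc cs hd
      rw [Set.iUnion_diff, Set.image_iUnion]
      exact Set.iUnion_congr hterm

end PartE
section PartF
open CoxInf
variable {B W : Type*} [Group W] {M : CoxeterMatrix B} (cs : CoxeterSystem M W)

local prefix:100 "ℓ" => cs.length
local prefix:100 "π" => cs.wordProd

lemma conjS_image_subset {S S' : Set W} (h : S ⊆ S') (i : B) :
    conjS cs i '' S ⊆ conjS cs i '' S' := Set.image_mono h

/-- If no element of `A` has `s i` as an inversion, neither does the join. -/
lemma crux (A : Set W) (w : W ⊕ {ω : ℕ → B // IsInfRedExpr cs ω}) (i : B)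
    (hub : ∀ a ∈ A, invSet cs a ⊆ barInv cs w)
    (hlub : ∀ u, (∀ a ∈ A, invSet cs a ⊆ barInv cs u) → barInv cs w ⊆ barInv cs u)
    (hA : ∀ a ∈ A, cs.simple i ∉ invSet cs a) :
    cs.simple i ∉ barInv cs w := by
  intro hmem
  obtain ⟨w', hw'⟩ := exists_delete cs w i hmem
  have hubw' : ∀ a ∈ A, invSet cs a ⊆ barInv cs w' := by
    intro a ha
    rw [hw']
    cases w with
    | inl x =>
        have h1 : invSet cs a ⊆ invSet cs (cs.simple i * x) :=
          invSet_subset_simple_mul cs (hub a ha) (hA a ha) hmem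
        rw [invSet_simple_mul_of_desc cs (length_simple_mul_desc cs hmem)] at h1
        exact h1
    | inr ω =>
        obtain ⟨ωf, hred⟩ := ω
        have hmono : ∀ m n : ℕ, m ≤ n →
            invSet cs (π (prefixWord ωf m)) ⊆ invSet cs (π (prefixWord ωf n)) := fun m n hmn =>
          invSet_prefix_mono cs hred hmn
        obtain ⟨N0, hN0⟩ := Set.mem_iUnion.mp hmem
        obtain ⟨N1, hN1⟩ := invSet_absorb cs _ hmono (hub a ha)
        have hsN : cs.simple i ∈ invSet cs (π (prefixWord ωf (max N0 N1))) :=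
          hmono N0 _ (le_max_left _ _) hN0
        have haN : invSet cs a ⊆ invSet cs (π (prefixWord ωf (max N0 N1))) :=
          hN1.trans (hmono N1 _ (le_max_right _ _))
        have h1 : invSet cs a ⊆ invSet cs (cs.simple i * π (prefixWord ωf (max N0 N1))) :=
          invSet_subset_simple_mul cs haN (hA a ha) hsN
        rw [invSet_simple_mul_of_desc cs (length_simple_mul_desc cs hsN)] at h1
        refine h1.trans (conjS_image_subset cs ?_ i)
        exact Set.diff_subset_diff_left (Set.subset_iUnion_of_subset (max N0 N1) (le_refl _))
  have hsub := hlub w' hubw'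
  rw [hw'] at hsub
  obtain ⟨t, ⟨htw, htne⟩, hconj⟩ := hsub hmem
  exact htne ((conjS_eq_simple_iff cs i t).mp hconj)

lemma simple_mem_invSet_simple_mul {i : B} {a : W} (hna : cs.simple i ∉ invSet cs a) :
    cs.simple i ∈ invSet cs (cs.simple i * a) := by
  rw [invSet_simple_mul_of_asc cs (length_simple_mul_asc cs hna)]
  exact Set.mem_insert _ _

lemma invSet_eq_conj_of_not_mem {i : B} {a : W} (hna : cs.simple i ∉ invSet cs a) :
    invSet cs a = conjS cs i '' (invSet cs (cs.simple i * a) \ {cs.simple i}) := by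
  have h1 : ℓ (cs.simple i * (cs.simple i * a)) + 1 = ℓ (cs.simple i * a) := by
    rw [cs.simple_mul_simple_cancel_left]
    exact (length_simple_mul_asc cs hna).symm
  have := invSet_simple_mul_of_desc cs h1
  rwa [cs.simple_mul_simple_cancel_left] at this

/-- Main lemma: join orthogonality for a finite `v` and a set of finite elements. -/
lemma main_lemma : ∀ (n : ℕ) (v : W), ℓ v = n →
    ∀ (A : Set W) (w : W ⊕ {ω : ℕ → B // IsInfRedExpr cs ω}),
    (∀ a ∈ A, invSet cs a ⊆ barInv cs w) →
    (∀ u, (∀ a ∈ A, invSet cs a ⊆ barInv cs u) → barInv cs w ⊆ barInv cs u) →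
    (∀ a ∈ A, invSet cs a ∩ invSet cs v = ∅) →
    barInv cs w ∩ invSet cs v = ∅ := by
  intro n
  induction n using Nat.strong_induction_on with
  | _ n ih =>
    intro v hn A w hub hlub horth
    rcases Set.eq_empty_or_nonempty A with rfl | ⟨a0, ha0⟩
    · have : barInv cs w ⊆ barInv cs (Sum.inl (1 : W)) := hlub _ (by simp)
      rw [barInv_inl, invSet_one] at this
      rw [Set.subset_empty_iff.mp this, Set.empty_inter]
    rcases eq_or_ne v 1 with rfl | hv1
    · rw [invSet_one, Set.inter_empty]
    obtain ⟨i, hi⟩ := cs.exists_leftDescent_of_ne_one hv1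
    have hsv : cs.simple i ∈ invSet cs v := ⟨cs.isReflection_simple i, hi⟩
    have hvdesc := length_simple_mul_desc cs hsv
    -- v = s i * v'
    have hvfac : cs.simple i * (cs.simple i * v) = v := cs.simple_mul_simple_cancel_left i
    have hv'asc : ℓ (cs.simple i * (cs.simple i * v)) = ℓ (cs.simple i * v) + 1 := by
      rw [hvfac]; omega
    have hinvv : invSet cs v
        = insert (cs.simple i) (conjS cs i '' invSet cs (cs.simple i * v)) := by
      conv_lhs => rw [← hvfac]
      exact invSet_simple_mul_of_asc cs hv'asc
    have hsv' : cs.simple i ∉ invSet cs (cs.simple i * v) := by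
      intro hc
      have := hc.2
      omega
    -- every a ∈ A avoids s i
    have hA : ∀ a ∈ A, cs.simple i ∉ invSet cs a := by
      intro a ha hc
      have : cs.simple i ∈ invSet cs a ∩ invSet cs v := ⟨hc, hsv⟩
      rw [horth a ha] at this
      exact this
    have hsiw : cs.simple i ∉ barInv cs w := crux cs A w i hub hlub hA
    obtain ⟨w', hw'⟩ := exists_prepend cs w i hsiw
    set A' : Set W := (fun a => cs.simple i * a) '' A with hA'
    -- upper bound
    have hub' : ∀ a' ∈ A', invSet cs a' ⊆ barInv cs w' := by
      rintro a' ⟨a, ha, rfl⟩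
      rw [invSet_simple_mul_of_asc cs (length_simple_mul_asc cs (hA a ha)), hw']
      rintro t (rfl | ⟨t1, ht1, rfl⟩)
      · exact Set.mem_insert _ _
      · exact Set.mem_insert_of_mem _ ⟨t1, hub a ha ht1, rfl⟩
    -- least upper bound
    have hlub' : ∀ u, (∀ a' ∈ A', invSet cs a' ⊆ barInv cs u) → barInv cs w' ⊆ barInv cs u := by
      intro u hu
      have hsiu : cs.simple i ∈ barInv cs u :=
        hu _ ⟨a0, ha0, rfl⟩ (simple_mem_invSet_simple_mul cs (hA a0 ha0))
      obtain ⟨u', hu'⟩ := exists_delete cs u i hsiu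
      have hubu' : ∀ a ∈ A, invSet cs a ⊆ barInv cs u' := by
        intro a ha
        rw [hu', invSet_eq_conj_of_not_mem cs (hA a ha)]
        exact conjS_image_subset cs
          (Set.diff_subset_diff_left (hu _ ⟨a, ha, rfl⟩)) i
      have hwu' := hlub u' hubu'
      rw [hu'] at hwu'
      rw [hw']
      rintro t (rfl | ⟨t1, ht1, rfl⟩)
      · exact hsiu
      · obtain ⟨t2, ⟨ht2u, -⟩, hconj⟩ := hwu' ht1
        rw [← hconj, conjS_conjS]
        exact ht2u
    -- orthogonality for A'
    have horth' : ∀ a' ∈ A', invSet cs a' ∩ invSet cs (cs.simple i * v) = ∅ := by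
      rintro a' ⟨a, ha, rfl⟩
      rw [Set.eq_empty_iff_forall_notMem]
      rintro t ⟨hta, htv⟩
      rw [invSet_simple_mul_of_asc cs (length_simple_mul_asc cs (hA a ha))] at hta
      rcases hta with rfl | ⟨t1, ht1, rfl⟩
      · exact hsv' htv
      · have htv2 : conjS cs i (conjS cs i t1) ∈ conjS cs i '' invSet cs (cs.simple i * v) :=
          ⟨conjS cs i t1, htv, rfl⟩
        rw [conjS_conjS] at htv2
        have : t1 ∈ invSet cs a ∩ invSet cs v := by
          refine ⟨ht1, ?_⟩
          rw [hinvv]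
          exact Set.mem_insert_of_mem _ htv2
        rw [horth a ha] at this
        exact this
    have hIH := ih (ℓ (cs.simple i * v)) (by omega) (cs.simple i * v) rfl A' w' hub' hlub' horth'
    -- conclude
    rw [Set.eq_empty_iff_forall_notMem]
    rintro t ⟨htw, htv⟩
    rw [hinvv] at htv
    rcases htv with rfl | ⟨t1, ht1, rfl⟩
    · exact hsiw htw
    · have : t1 ∈ barInv cs w' ∩ invSet cs (cs.simple i * v) := by
        refine ⟨?_, ht1⟩
        rw [hw']
        have : conjS cs i (conjS cs i t1) ∈ conjS cs i '' barInv cs w :=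
          ⟨conjS cs i t1, htw, rfl⟩
        rw [conjS_conjS] at this
        exact Set.mem_insert_of_mem _ this
      rw [hIH] at this
      exact this

end PartF
end CoxJop

open CoxInf in
/-- Join Orthogonality Property: if `A ⊆ W̄` admits a join `w` in `W̄` under the weak order
and `v ∈ W̄` satisfies `a ⊥ v` (`Φ_a ∩ Φ_v = ∅`) for all `a ∈ A`, then `w ⊥ v`. -/
theorem join_orthogonality_property
    {B : Type*} {W : Type*} [Group W] {M : CoxeterMatrix B} (cs : CoxeterSystem M W)
    (A : Set (W ⊕ {ω : ℕ → B // IsInfRedExpr cs ω}))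
    (w : W ⊕ {ω : ℕ → B // IsInfRedExpr cs ω})
    (hub : ∀ a ∈ A, barInv cs a ⊆ barInv cs w)
    (hlub : ∀ u : W ⊕ {ω : ℕ → B // IsInfRedExpr cs ω},
      (∀ a ∈ A, barInv cs a ⊆ barInv cs u) → barInv cs w ⊆ barInv cs u)
    (v : W ⊕ {ω : ℕ → B // IsInfRedExpr cs ω})
    (horth : ∀ a ∈ A, barInv cs a ∩ barInv cs v = ∅) :
    barInv cs w ∩ barInv cs v = ∅ := by
  classical
  -- the set of finite approximations of elements of `A`
  set Afin : Set W := {x | Sum.inl x ∈ A ∨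
    ∃ (ω : {ω : ℕ → B // IsInfRedExpr cs ω}) (n : ℕ),
      Sum.inr ω ∈ A ∧ x = cs.wordProd (prefixWord ω.1 n)} with hAfin
  have hsub_bar : ∀ x ∈ Afin, ∃ a ∈ A, invSet cs x ⊆ barInv cs a := by
    rintro x (hx | ⟨ω, n, hω, rfl⟩)
    · exact ⟨Sum.inl x, hx, subset_of_eq (CoxJop.barInv_inl cs x).symm⟩
    · refine ⟨Sum.inr ω, hω, ?_⟩
      rw [CoxJop.barInv_inr]
      exact Set.subset_iUnion_of_subset n (le_refl _)
  have hubF : ∀ x ∈ Afin, invSet cs x ⊆ barInv cs w := by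
    intro x hx
    obtain ⟨a, ha, hsub⟩ := hsub_bar x hx
    exact hsub.trans (hub a ha)
  have hlubF : ∀ u, (∀ x ∈ Afin, invSet cs x ⊆ barInv cs u) → barInv cs w ⊆ barInv cs u := by
    intro u hu
    apply hlub u
    intro a ha
    cases a with
    | inl x => exact hu x (Or.inl ha)
    | inr ω =>
        rw [CoxJop.barInv_inr]
        exact Set.iUnion_subset fun n => hu _ (Or.inr ⟨ω, n, ha, rfl⟩)
  have horthF : ∀ (v0 : W), invSet cs v0 ⊆ barInv cs v →
      ∀ x ∈ Afin, invSet cs x ∩ invSet cs v0 = ∅ := by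
    intro v0 hv0 x hx
    obtain ⟨a, ha, hsub⟩ := hsub_bar x hx
    rw [Set.eq_empty_iff_forall_notMem]
    rintro t ⟨htx, htv⟩
    have : t ∈ barInv cs a ∩ barInv cs v := ⟨hsub htx, hv0 htv⟩
    rw [horth a ha] at this
    exact this
  have key : ∀ (v0 : W), invSet cs v0 ⊆ barInv cs v →
      barInv cs w ∩ invSet cs v0 = ∅ := by
    intro v0 hv0
    exact CoxJop.main_lemma cs (cs.length v0) v0 rfl Afin w hubF hlubF (horthF v0 hv0)
  cases v with
  | inl v0 => exact key v0 (subset_of_eq (CoxJop.barInv_inl cs v0).symm)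
  | inr σ =>
      rw [Set.eq_empty_iff_forall_notMem]
      rintro t ⟨htw, htv⟩
      rw [CoxJop.barInv_inr] at htv
      obtain ⟨n, hn⟩ := Set.mem_iUnion.mp htv
      have := key (cs.wordProd (prefixWord σ.1 n)) (by
        rw [CoxJop.barInv_inr]
        exact Set.subset_iUnion_of_subset n (le_refl _))
      rw [Set.eq_empty_iff_forall_notMem] at this
      exact this t ⟨htw, hn⟩
end

section
/- Let Φ be an irreducible crystallographic root system with positive system Φ⁺ and simple system Π, and let L ⊊ Π. Then for every α ∈ Φ⁺, d_L(α) = h_L(α). -/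
open scoped RealInnerProductSpace

namespace AffineBiclosed

variable {V : Type*} [NormedAddCommGroup V] [InnerProductSpace ℝ V]

/-- An irreducible crystallographic root system in the Euclidean space `V`. -/
structure IsIrrCrystRootSystem (Φ : Set V) : Prop where
  finite : Φ.Finite
  nonzero : (0 : V) ∉ Φ
  spanning : Submodule.span ℝ Φ = ⊤
  reflect_mem : ∀ α ∈ Φ, ∀ β ∈ Φ, β - (2 * ⟪β, α⟫ / ⟪α, α⟫) • α ∈ Φ
  crystallographic : ∀ α ∈ Φ, ∀ β ∈ Φ, ∃ k : ℤ, (k : ℝ) = 2 * ⟪β, α⟫ / ⟪α, α⟫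
  reduced : ∀ α ∈ Φ, ∀ t : ℝ, t • α ∈ Φ → t = 1 ∨ t = -1
  irreducible : ∀ Φ₁ Φ₂ : Set V, Φ₁ ∪ Φ₂ = Φ → Disjoint Φ₁ Φ₂ →
      (∀ α ∈ Φ₁, ∀ β ∈ Φ₂, ⟪α, β⟫ = 0) → Φ₁ = ∅ ∨ Φ₂ = ∅

/-- `Pos` is a positive system of the root system `Φ`. -/
def IsPositiveSystem (Φ Pos : Set V) : Prop :=
  ∃ f : V →ₗ[ℝ] ℝ, (∀ α ∈ Φ, f α ≠ 0) ∧ Pos = {α ∈ Φ | 0 < f α}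

/-- The simple system of a positive system: its indecomposable elements. -/
def simples (Pos : Set V) : Set V :=
  {α ∈ Pos | ¬ ∃ β ∈ Pos, ∃ γ ∈ Pos, α = β + γ}

/-- The root subsystem of `Φ` generated by a set `Δ` of simple roots. -/
def subsys (Φ Δ : Set V) : Set V := Φ ∩ (Submodule.span ℝ Δ : Set V)

/-- The biclosed set `Ψ⁺_{L,M} = (Ψ⁺ \ Φ_L) ∪ Φ_M` in `Φ`. -/
def posLM (Φ Pos L M : Set V) : Set V := (Pos \ subsys Φ L) ∪ subsys Φ M

section Closure

variable {E : Type*} [AddCommGroup E] [Module ℝ E]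

/-- `Γ` is closed in `T`. -/
def IsClosedIn (T Γ : Set E) : Prop :=
  Γ ⊆ T ∧ ∀ a ∈ Γ, ∀ b ∈ Γ, ∀ k₁ k₂ : ℝ, 0 ≤ k₁ → 0 ≤ k₂ →
    k₁ • a + k₂ • b ∈ T → k₁ • a + k₂ • b ∈ Γ

/-- `Γ` is biclosed in `T`. -/
def IsBiclosedIn (T Γ : Set E) : Prop := IsClosedIn T Γ ∧ IsClosedIn T (T \ Γ)

/-- The closure of `X` in `T`: the smallest subset of `T` closed in `T` containing `X`. -/
def closureIn (T X : Set E) : Set E := ⋂₀ {Γ : Set E | X ⊆ Γ ∧ IsClosedIn T Γ}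

end Closure

/-- For `Γ ⊆ Φ`, the set `Γ̂ ⊆ V × ℝ`, where `δ = (0,1)`; positivity is measured by the
standard positive system `Pos`. -/
def hat (Pos Γ : Set V) : Set (V × ℝ) :=
  {x | ∃ α ∈ Γ, ∃ n : ℕ, x.1 = α ∧
    ((α ∈ Pos ∧ x.2 = (n : ℝ)) ∨ (α ∉ Pos ∧ x.2 = (n : ℝ) + 1))}

/-- The reflection in the affine root `a`, as a function on `V × ℝ`, with respect to the
degenerate bilinear form `⟨(v,s),(w,t)⟩ = ⟪v,w⟫`. -/
noncomputable def reflVec (a : V × ℝ) (x : V × ℝ) : V × ℝ :=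
  x - (2 * ⟪x.1, a.1⟫ / ⟪a.1, a.1⟫) • a

theorem reflVec_involutive (a : V × ℝ) : Function.Involutive (reflVec a) := by
  intro x
  by_cases h : ⟪a.1, a.1⟫ = 0
  · simp only [reflVec, h, div_zero, zero_smul, sub_zero]
  · unfold reflVec
    have h1 : (x - (2 * ⟪x.1, a.1⟫ / ⟪a.1, a.1⟫) • a).1
        = x.1 - (2 * ⟪x.1, a.1⟫ / ⟪a.1, a.1⟫) • a.1 := rfl
    rw [h1]
    have key : 2 * ⟪x.1 - (2 * ⟪x.1, a.1⟫ / ⟪a.1, a.1⟫) • a.1, a.1⟫ / ⟪a.1, a.1⟫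
        = -(2 * ⟪x.1, a.1⟫ / ⟪a.1, a.1⟫) := by
      rw [inner_sub_left, real_inner_smul_left]
      field_simp
      ring
    rw [key, neg_smul, sub_neg_eq_add, sub_add_cancel]

/-- The reflection in the affine root `a`, as a permutation of `V × ℝ`. -/
noncomputable def reflPerm (a : V × ℝ) : Equiv.Perm (V × ℝ) :=
  Function.Involutive.toPerm _ (reflVec_involutive a)

/-- The affine Weyl group of `Φ`, realized as the group of permutations of `V × ℝ`
generated by the reflections in the affine roots. -/
noncomputable def affineWeyl (Φ Pos : Set V) : Subgroup (Equiv.Perm (V × ℝ)) :=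
  Subgroup.closure (reflPerm '' hat Pos Φ)

/-- The inversion set `Φ_w = {a ∈ Φ̃⁺ | w⁻¹ a ∈ −Φ̃⁺}`. -/
def invSetOf (Φ Pos : Set V) (w : Equiv.Perm (V × ℝ)) : Set (V × ℝ) :=
  {a ∈ hat Pos Φ | -(w⁻¹ a) ∈ hat Pos Φ}

/-- The product of the reflections in the listed affine roots. -/
noncomputable def wordProd (l : List (V × ℝ)) : Equiv.Perm (V × ℝ) :=
  (l.map reflPerm).prod

/-- The simple affine roots: the indecomposable elements of `Φ̃⁺`. -/
def affSimples (Φ Pos : Set V) : Set (V × ℝ) :=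
  {a ∈ hat Pos Φ | ¬ ∃ b ∈ hat Pos Φ, ∃ c ∈ hat Pos Φ, a = b + c}

/-- `l` is a reduced word (in the simple affine reflections). -/
def IsReducedWord (Φ Pos : Set V) (l : List (V × ℝ)) : Prop :=
  (∀ a ∈ l, a ∈ affSimples Φ Pos) ∧
    ∀ l' : List (V × ℝ), (∀ a ∈ l', a ∈ affSimples Φ Pos) →
      wordProd l' = wordProd l → l.length ≤ l'.length

/-- The length-`n` prefix of an infinite word. -/
def prefixWord (ω : ℕ → V × ℝ) (n : ℕ) : List (V × ℝ) :=
  List.ofFn (fun i : Fin n => ω i)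

/-- `ω` is an infinite reduced expression. -/
def IsInfRedExpr (Φ Pos : Set V) (ω : ℕ → V × ℝ) : Prop :=
  ∀ n, IsReducedWord Φ Pos (prefixWord ω n)

/-- The inversion set of an infinite reduced expression. -/
def infInvSet (Φ Pos : Set V) (ω : ℕ → V × ℝ) : Set (V × ℝ) :=
  ⋃ n, invSetOf Φ Pos (wordProd (prefixWord ω n))

/-- The action `x·Γ = (Φ_x \ x(−Γ)) ∪ (x(Γ) \ (−Φ_x))` of the affine Weyl group on
biclosed sets. -/
def dotAct (Φ Pos : Set V) (x : Equiv.Perm (V × ℝ)) (Γ : Set (V × ℝ)) : Set (V × ℝ) :=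
  (invSetOf Φ Pos x \ (⇑x '' (-Γ))) ∪ ((⇑x '' Γ) \ (-(invSetOf Φ Pos x)))

end AffineBiclosed

namespace AffineBiclosed

variable {V : Type*} [NormedAddCommGroup V] [InnerProductSpace ℝ V]

open Classical in
/-- The function `d_L : Φ⁺ → ℕ`: for `α ∈ Φ⁺_{L,∅}`, the maximal `n` such that `α` can be
written as the sum of `n` elements of `Φ⁺_{L,∅}`; and `0` otherwise. -/
noncomputable def dL (Φ Pos L : Set V) (α : V) : ℕ :=
  if α ∈ posLM Φ Pos L ∅ then
    sSup {n : ℕ | ∃ l : List V, l.length = n ∧ (∀ β ∈ l, β ∈ posLM Φ Pos L ∅) ∧ l.sum = α}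
  else 0

end AffineBiclosed

namespace DLHL

open AffineBiclosed
open scoped Classical

variable {V : Type*} [NormedAddCommGroup V] [InnerProductSpace ℝ V]
variable {Φ Pos L : Set V} {f g g₀ : V →ₗ[ℝ] ℝ}

lemma inner_self_pos' (h0 : (0:V) ∉ Φ) {α : V} (hα : α ∈ Φ) : 0 < ⟪α, α⟫ := by
  have hα0 : α ≠ 0 := fun h => h0 (h ▸ hα)
  exact lt_of_le_of_ne real_inner_self_nonneg (Ne.symm (inner_self_ne_zero.mpr hα0))

lemma neg_mem' (h0 : (0:V) ∉ Φ)
    (hrefl : ∀ α ∈ Φ, ∀ β ∈ Φ, β - (2 * ⟪β, α⟫ / ⟪α, α⟫) • α ∈ Φ)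
    {α : V} (hα : α ∈ Φ) : -α ∈ Φ := by
  have hq : ⟪α, α⟫ ≠ 0 := (inner_self_pos' h0 hα).ne'
  have h := hrefl α hα α hα
  have h2 : 2 * ⟪α, α⟫ / ⟪α, α⟫ = 2 := by field_simp
  rw [h2] at h
  have h3 : α - (2:ℝ) • α = -α := by
    rw [two_smul]; abel
  rwa [h3] at h

lemma pos_subset (hP : Pos = {α ∈ Φ | 0 < f α}) : Pos ⊆ Φ := by
  rw [hP]; exact fun a ha => ha.1

lemma mem_pos_or_neg (hf : ∀ α ∈ Φ, f α ≠ 0) (hP : Pos = {α ∈ Φ | 0 < f α})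
    (h0 : (0:V) ∉ Φ)
    (hrefl : ∀ α ∈ Φ, ∀ β ∈ Φ, β - (2 * ⟪β, α⟫ / ⟪α, α⟫) • α ∈ Φ)
    {α : V} (hα : α ∈ Φ) : α ∈ Pos ∨ -α ∈ Pos := by
  rcases (hf α hα).lt_or_gt with h | h
  · right
    rw [hP]
    exact ⟨neg_mem' h0 hrefl hα, by simpa using h⟩
  · left
    rw [hP]
    exact ⟨hα, h⟩

lemma sub_mem_aux (h0 : (0:V) ∉ Φ)
    (hrefl : ∀ α ∈ Φ, ∀ β ∈ Φ, β - (2 * ⟪β, α⟫ / ⟪α, α⟫) • α ∈ Φ)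
    (hcrys : ∀ α ∈ Φ, ∀ β ∈ Φ, ∃ k : ℤ, (k : ℝ) = 2 * ⟪β, α⟫ / ⟪α, α⟫)
    {α β : V} (hα : α ∈ Φ) (hβ : β ∈ Φ)
    (hip : 0 < ⟪α, β⟫) (hne : α ≠ β) (hnorm : ‖β‖ ≤ ‖α‖) : α - β ∈ Φ := by
  obtain ⟨k, hk⟩ := hcrys α hα β hβ
  have hq : 0 < ⟪α, α⟫ := inner_self_pos' h0 hα
  have hba : 0 < ⟪β, α⟫ := by rwa [real_inner_comm]
  have hkpos : (0:ℝ) < (k:ℝ) := by rw [hk]; positivity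
  have hk1 : 1 ≤ k := by exact_mod_cast hkpos
  have hCS : ⟪β, α⟫ ≤ ‖β‖ * ‖α‖ := real_inner_le_norm β α
  have hnn : ‖β‖ * ‖α‖ ≤ ‖α‖ * ‖α‖ :=
    mul_le_mul_of_nonneg_right hnorm (norm_nonneg α)
  have hq' : ⟪α, α⟫ = ‖α‖ * ‖α‖ := real_inner_self_eq_norm_mul_norm α
  have hk2 : (k:ℝ) ≤ 2 := by
    rw [hk, div_le_iff₀ hq]
    nlinarith
  have hk2' : k ≤ 2 := by exact_mod_cast hk2
  have hrefl' := hrefl α hα β hβ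
  rcases (by omega : k = 1 ∨ k = 2) with h1 | h2
  · subst h1
    rw [← hk] at hrefl'
    have h1s : ((1:ℤ):ℝ) • α = α := by norm_num
    rw [h1s] at hrefl'
    have := neg_mem' h0 hrefl hrefl'
    rwa [neg_sub] at this
  · exfalso
    subst h2
    have hba' : ⟪β, α⟫ = ⟪α, α⟫ := by
      have : (2:ℝ) = 2 * ⟪β, α⟫ / ⟪α, α⟫ := by exact_mod_cast hk
      field_simp at this
      linarith
    have heq : ⟪β, α⟫ = ‖β‖ * ‖α‖ := by nlinarith
    have hnb : ‖β‖ = ‖α‖ := by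
      have hαn : (0:ℝ) < ‖α‖ := by
        have : α ≠ 0 := fun h => h0 (h ▸ hα)
        simpa [norm_pos_iff] using this
      nlinarith
    have := inner_eq_norm_mul_iff_real.mp heq
    rw [hnb] at this
    have hβα : β = α := by
      have hαn : ‖α‖ ≠ 0 := by
        have : α ≠ 0 := fun h => h0 (h ▸ hα)
        simpa using this
      exact smul_right_injective V hαn this
    exact hne hβα.symm

lemma sub_mem (h0 : (0:V) ∉ Φ)
    (hrefl : ∀ α ∈ Φ, ∀ β ∈ Φ, β - (2 * ⟪β, α⟫ / ⟪α, α⟫) • α ∈ Φ)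
    (hcrys : ∀ α ∈ Φ, ∀ β ∈ Φ, ∃ k : ℤ, (k : ℝ) = 2 * ⟪β, α⟫ / ⟪α, α⟫)
    {α β : V} (hα : α ∈ Φ) (hβ : β ∈ Φ)
    (hip : 0 < ⟪α, β⟫) (hne : α ≠ β) : α - β ∈ Φ := by
  rcases le_total ‖β‖ ‖α‖ with h | h
  · exact sub_mem_aux h0 hrefl hcrys hα hβ hip hne h
  · have hip' : 0 < ⟪β, α⟫ := by rwa [real_inner_comm]
    have := sub_mem_aux h0 hrefl hcrys hβ hα hip' (Ne.symm hne) h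
    have := neg_mem' h0 hrefl this
    rwa [neg_sub] at this

lemma simples_obtuse (hf : ∀ α ∈ Φ, f α ≠ 0) (hP : Pos = {α ∈ Φ | 0 < f α})
    (h0 : (0:V) ∉ Φ)
    (hrefl : ∀ α ∈ Φ, ∀ β ∈ Φ, β - (2 * ⟪β, α⟫ / ⟪α, α⟫) • α ∈ Φ)
    (hcrys : ∀ α ∈ Φ, ∀ β ∈ Φ, ∃ k : ℤ, (k : ℝ) = 2 * ⟪β, α⟫ / ⟪α, α⟫)
    {π π' : V} (hπ : π ∈ simples Pos) (hπ' : π' ∈ simples Pos) (hne : π ≠ π') :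
    ⟪π, π'⟫ ≤ 0 := by
  by_contra h
  push_neg at h
  have hπP : π ∈ Pos := hπ.1
  have hπ'P : π' ∈ Pos := hπ'.1
  have hπΦ : π ∈ Φ := pos_subset hP hπP
  have hπ'Φ : π' ∈ Φ := pos_subset hP hπ'P
  have hsub : π - π' ∈ Φ := sub_mem h0 hrefl hcrys hπΦ hπ'Φ h hne
  rcases mem_pos_or_neg hf hP h0 hrefl hsub with hs | hs
  · exact hπ.2 ⟨π - π', hs, π', hπ'P, by abel⟩
  · rw [neg_sub] at hs
    exact hπ'.2 ⟨π' - π, hs, π, hπP, by abel⟩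

lemma pos_decompose (hfin : Φ.Finite) (hf : ∀ α ∈ Φ, f α ≠ 0)
    (hP : Pos = {α ∈ Φ | 0 < f α}) :
    ∀ γ ∈ Pos, ∃ l : List V, l ≠ [] ∧ (∀ π ∈ l, π ∈ simples Pos) ∧ l.sum = γ := by
  have hPfin : Pos.Finite := hfin.subset (pos_subset hP)
  have hfpos : ∀ γ ∈ Pos, 0 < f γ := by
    rw [hP]; exact fun γ hγ => hγ.2
  suffices H : ∀ N : ℕ, ∀ γ ∈ Pos, ({δ ∈ Pos | f δ ≤ f γ}).ncard ≤ N →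
      ∃ l : List V, l ≠ [] ∧ (∀ π ∈ l, π ∈ simples Pos) ∧ l.sum = γ by
    exact fun γ hγ => H _ γ hγ le_rfl
  intro N
  induction N with
  | zero =>
    intro γ hγ hcard
    exfalso
    have hmem : γ ∈ {δ ∈ Pos | f δ ≤ f γ} := ⟨hγ, le_rfl⟩
    have hfin' : ({δ ∈ Pos | f δ ≤ f γ}).Finite := hPfin.subset fun x hx => hx.1
    have := (Set.ncard_pos hfin').mpr ⟨γ, hmem⟩
    omega
  | succ N ih =>
    intro γ hγ hcard
    by_cases hs : γ ∈ simples Pos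
    · exact ⟨[γ], by simp, by simpa using hs, by simp⟩
    · have hdec : ∃ b ∈ Pos, ∃ c ∈ Pos, γ = b + c := by
        by_contra hnd
        exact hs ⟨hγ, hnd⟩
      obtain ⟨b, hb, c, hc, hbc⟩ := hdec
      have hfγ : f γ = f b + f c := by rw [hbc]; exact map_add f b c
      have hfb : f b < f γ := by have := hfpos c hc; linarith
      have hfc : f c < f γ := by have := hfpos b hb; linarith
      have key : ∀ a ∈ Pos, f a < f γ → ({δ ∈ Pos | f δ ≤ f a}).ncard ≤ N := by
        intro a _ hfa
        have hss : {δ ∈ Pos | f δ ≤ f a} ⊂ {δ ∈ Pos | f δ ≤ f γ} := by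
          constructor
          · exact fun x hx => ⟨hx.1, hx.2.trans hfa.le⟩
          · intro hsub'
            exact absurd (hsub' ⟨hγ, le_rfl⟩).2 (not_le.mpr hfa)
        have := Set.ncard_lt_ncard hss (hPfin.subset fun x hx => hx.1)
        omega
      obtain ⟨lb, hlbne, hlb, hlbs⟩ := ih b hb (key b hb hfb)
      obtain ⟨lc, _, hlc, hlcs⟩ := ih c hc (key c hc hfc)
      refine ⟨lb ++ lc, by simp [hlbne], ?_, by rw [List.sum_append, hlbs, hlcs, hbc]⟩
      intro π hπ
      rcases List.mem_append.mp hπ with h | h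
      · exact hlb π h
      · exact hlc π h

lemma simples_indep (hf : ∀ α ∈ Φ, f α ≠ 0) (hP : Pos = {α ∈ Φ | 0 < f α})
    (hobt : ∀ π ∈ simples Pos, ∀ π' ∈ simples Pos, π ≠ π' → ⟪π, π'⟫ ≤ 0) :
    LinearIndependent ℝ (fun π : simples Pos => (π : V)) := by
  have hfpos : ∀ π : simples Pos, 0 < f (π : V) := by
    intro π
    have h2 : (π : V) ∈ {α | α ∈ Φ ∧ 0 < f α} := by rw [← hP]; exact π.2.1
    exact h2.2
  rw [linearIndependent_iff']
  intro s c hsum i hi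
  classical
  set P : Finset (simples Pos) := s.filter (fun j => 0 < c j) with hPdef
  set Q : Finset (simples Pos) := s.filter (fun j => ¬ 0 < c j) with hQdef
  set x : V := ∑ j ∈ P, c j • (j : V) with hx
  set y : V := ∑ j ∈ Q, (-c j) • (j : V) with hy
  have hxy : x = y := by
    have hsplit := Finset.sum_filter_add_sum_filter_not s (fun j => 0 < c j)
      (fun j => c j • (j : V))
    rw [hsum] at hsplit
    have h2 : x + ∑ j ∈ Q, c j • (j : V) = 0 := hsplit
    have h3 : ∑ j ∈ Q, c j • (j : V) = -y := by
      rw [hy, ← Finset.sum_neg_distrib]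
      exact Finset.sum_congr rfl fun j _ => by rw [neg_smul, neg_neg]
    rw [h3] at h2
    exact sub_eq_zero.mp (by rwa [sub_eq_add_neg])
  have hinner : ⟪x, y⟫ ≤ 0 := by
    rw [hx, sum_inner]
    apply Finset.sum_nonpos
    intro j hj
    rw [hy, inner_sum]
    apply Finset.sum_nonpos
    intro j' hj'
    rw [real_inner_smul_left, real_inner_smul_right]
    have hcj : 0 < c j := (Finset.mem_filter.mp hj).2
    have hcj' : c j' ≤ 0 := not_lt.mp (Finset.mem_filter.mp hj').2
    have hjj' : (j : V) ≠ (j' : V) := by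
      intro h
      have : j = j' := Subtype.coe_injective h
      subst this
      exact hcj'.not_gt hcj
    have hob := hobt (j : V) j.2 (j' : V) j'.2 hjj'
    have h1 : -c j' * ⟪(j:V), (j':V)⟫ ≤ 0 :=
      mul_nonpos_iff.mpr (Or.inl ⟨by linarith, hob⟩)
    exact mul_nonpos_iff.mpr (Or.inl ⟨hcj.le, h1⟩)
  have hx0 : x = 0 := by
    have hxxle : ⟪x, x⟫ ≤ 0 := by
      calc ⟪x, x⟫ = ⟪x, y⟫ := by rw [← hxy]
      _ ≤ 0 := hinner
    exact real_inner_self_nonpos.mp hxxle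
  have hfx : ∑ j ∈ P, c j * f (j : V) = 0 := by
    have : f x = 0 := by rw [hx0]; exact map_zero f
    rw [hx, map_sum] at this
    simpa [map_smul, smul_eq_mul] using this
  have hPzero : ∀ j ∈ P, c j * f (j : V) = 0 := by
    rw [← Finset.sum_eq_zero_iff_of_nonneg]
    · exact hfx
    · intro j hj
      have hcj : 0 < c j := (Finset.mem_filter.mp hj).2
      have := hfpos j
      positivity
  have hPempty : ∀ j ∈ P, False := by
    intro j hj
    have hcj : 0 < c j := (Finset.mem_filter.mp hj).2
    have := hfpos j
    have := hPzero j hj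
    nlinarith
  have hfy : ∑ j ∈ Q, (-c j) * f (j : V) = 0 := by
    have : f y = 0 := by rw [← hxy, hx0]; exact map_zero f
    rw [hy, map_sum] at this
    simpa [map_smul, smul_eq_mul] using this
  have hQzero : ∀ j ∈ Q, (-c j) * f (j : V) = 0 := by
    rw [← Finset.sum_eq_zero_iff_of_nonneg]
    · exact hfy
    · intro j hj
      have hcj : c j ≤ 0 := not_lt.mp (Finset.mem_filter.mp hj).2
      have := hfpos j
      nlinarith
  by_cases hci : 0 < c i
  · exact absurd (hPempty i (Finset.mem_filter.mpr ⟨hi, hci⟩)) id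
  · have := hQzero i (Finset.mem_filter.mpr ⟨hi, hci⟩)
    have hfi := hfpos i
    have : -c i = 0 := by
      rcases mul_eq_zero.mp this with h | h
      · exact h
      · exact absurd h hfi.ne'
    linarith

lemma simples_span (hspan : Submodule.span ℝ Φ = ⊤) (h0 : (0:V) ∉ Φ)
    (hrefl : ∀ α ∈ Φ, ∀ β ∈ Φ, β - (2 * ⟪β, α⟫ / ⟪α, α⟫) • α ∈ Φ)
    (hfin : Φ.Finite) (hf : ∀ α ∈ Φ, f α ≠ 0) (hP : Pos = {α ∈ Φ | 0 < f α}) :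
    Submodule.span ℝ (simples Pos) = ⊤ := by
  have hPosSub : ∀ γ ∈ Pos, γ ∈ Submodule.span ℝ (simples Pos) := by
    intro γ hγ
    obtain ⟨l, -, hl, hls⟩ := pos_decompose hfin hf hP γ hγ
    rw [← hls]
    exact list_sum_mem fun x hx => Submodule.subset_span (hl x hx)
  have hsub : Φ ⊆ (Submodule.span ℝ (simples Pos) : Set V) := by
    intro a ha
    rcases mem_pos_or_neg hf hP h0 hrefl ha with h | h
    · exact hPosSub a h
    · have := hPosSub _ h
      simpa using Submodule.neg_mem _ this
  rw [eq_top_iff, ← hspan, Submodule.span_le]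
  exact hsub

lemma exists_functional
    (hindep : LinearIndependent ℝ (fun π : simples Pos => (π : V)))
    (hsp : Submodule.span ℝ (simples Pos) = ⊤) (c : V → ℝ) :
    ∃ g : V →ₗ[ℝ] ℝ, ∀ π ∈ simples Pos, g π = c π := by
  have hrange : Set.range (fun π : simples Pos => (π : V)) = simples Pos :=
    Subtype.range_coe
  let B : Module.Basis (simples Pos) ℝ V := Module.Basis.mk hindep (by rw [hrange, hsp])
  refine ⟨B.constr ℝ (fun i => c (i : V)), ?_⟩
  intro π hπ
  have hB : B ⟨π, hπ⟩ = π := Module.Basis.mk_apply hindep _ ⟨π, hπ⟩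
  conv_lhs => rw [← hB]
  rw [Module.Basis.constr_basis]

lemma g_values (hfin : Φ.Finite) (hf : ∀ α ∈ Φ, f α ≠ 0)
    (hP : Pos = {α ∈ Φ | 0 < f α})
    (hg : ∀ π ∈ simples Pos, g π = if π ∈ L then 0 else 1) :
    ∀ γ ∈ Pos, ∃ n : ℕ, (n:ℝ) = g γ ∧ (n = 0 → γ ∈ Submodule.span ℝ L) := by
  have haux : ∀ l : List V, (∀ π ∈ l, π ∈ simples Pos) →
      ∃ n : ℕ, (n:ℝ) = g l.sum ∧ (n = 0 → l.sum ∈ Submodule.span ℝ L) := by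
    intro l
    induction l with
    | nil => exact fun _ => ⟨0, by simp, fun _ => by simp⟩
    | cons a t ih =>
      intro hmem
      obtain ⟨n, hn, hn0⟩ := ih (fun π hπ => hmem π (List.mem_cons_of_mem a hπ))
      have ha := hmem a List.mem_cons_self
      have hga := hg a ha
      by_cases haL : a ∈ L
      · refine ⟨n, ?_, ?_⟩
        · rw [List.sum_cons, map_add, hga, if_pos haL, zero_add]
          exact hn
        · intro h0'
          rw [List.sum_cons]
          exact Submodule.add_mem _ (Submodule.subset_span haL) (hn0 h0')
      · refine ⟨n + 1, ?_, fun h => absurd h (Nat.succ_ne_zero n)⟩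
        rw [List.sum_cons, map_add, hga, if_neg haL]
        push_cast
        linarith
  intro γ hγ
  obtain ⟨l, -, hl, hls⟩ := pos_decompose hfin hf hP γ hγ
  obtain ⟨n, h1, h2⟩ := haux l hl
  rw [hls] at h1 h2
  exact ⟨n, h1, h2⟩

lemma g_span_zero (hLs : L ⊆ simples Pos)
    (hg : ∀ π ∈ simples Pos, g π = if π ∈ L then 0 else 1) :
    ∀ v ∈ Submodule.span ℝ L, g v = 0 := by
  intro v hv
  have hle : Submodule.span ℝ L ≤ LinearMap.ker g := by
    rw [Submodule.span_le]
    intro π hπ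
    have : g π = 0 := by rw [hg π (hLs hπ), if_pos hπ]
    simpa [LinearMap.mem_ker] using this
  simpa [LinearMap.mem_ker] using hle hv

lemma upper_bound (hfin : Φ.Finite) (hf : ∀ α ∈ Φ, f α ≠ 0)
    (hP : Pos = {α ∈ Φ | 0 < f α})
    (hg : ∀ π ∈ simples Pos, g π = if π ∈ L then 0 else 1) :
    ∀ l : List V, (∀ β ∈ l, β ∈ Pos ∧ β ∉ Submodule.span ℝ L) →
      (l.length : ℝ) ≤ g l.sum := by
  intro l
  induction l with
  | nil => simp
  | cons a t ih =>
    intro h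
    have ha := h a List.mem_cons_self
    obtain ⟨n, hn, hn0⟩ := g_values hfin hf hP hg a ha.1
    have hn1 : 1 ≤ n := by
      rcases Nat.eq_zero_or_pos n with h' | h'
      · exact absurd (hn0 h') ha.2
      · exact h'
    have hga : 1 ≤ g a := by
      rw [← hn]; exact_mod_cast hn1
    have ht := ih (fun β hβ => h β (List.mem_cons_of_mem a hβ))
    rw [List.sum_cons, map_add, List.length_cons]
    push_cast
    linarith

lemma inner_list_sum (α : V) : ∀ l : List V,
    ⟪α, l.sum⟫ = (l.map (fun π => ⟪α, π⟫)).sum := by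
  intro l
  induction l with
  | nil => simp
  | cons a t ih => rw [List.sum_cons, inner_add_right, List.map_cons, List.sum_cons, ih]

lemma list_sum_nonpos' : ∀ l : List ℝ, (∀ x ∈ l, x ≤ 0) → l.sum ≤ 0 := by
  intro l
  induction l with
  | nil => simp
  | cons a t ih =>
    intro h
    rw [List.sum_cons]
    have h1 := h a List.mem_cons_self
    have h2 := ih (fun x hx => h x (List.mem_cons_of_mem a hx))
    linarith

lemma mem_posLM (h0 : (0:V) ∉ Φ) (hPΦ : Pos ⊆ Φ) {β : V} :
    β ∈ posLM Φ Pos L ∅ ↔ β ∈ Pos ∧ β ∉ Submodule.span ℝ L := by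
  unfold posLM subsys
  constructor
  · rintro (⟨h1, h2⟩ | ⟨h1, h2⟩)
    · exact ⟨h1, fun hs => h2 ⟨hPΦ h1, hs⟩⟩
    · exfalso
      rw [Submodule.span_empty] at h2
      have hb0 : β = (0:V) := by simpa using h2
      exact h0 (hb0 ▸ h1)
  · rintro ⟨h1, h2⟩
    exact Or.inl ⟨h1, fun hs => h2 hs.2⟩

lemma lower_bound (h0 : (0:V) ∉ Φ) (hfin : Φ.Finite)
    (hrefl : ∀ α ∈ Φ, ∀ β ∈ Φ, β - (2 * ⟪β, α⟫ / ⟪α, α⟫) • α ∈ Φ)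
    (hcrys : ∀ α ∈ Φ, ∀ β ∈ Φ, ∃ k : ℤ, (k : ℝ) = 2 * ⟪β, α⟫ / ⟪α, α⟫)
    (hf : ∀ α ∈ Φ, f α ≠ 0) (hP : Pos = {α ∈ Φ | 0 < f α})
    (hLs : L ⊆ simples Pos)
    (hg : ∀ π ∈ simples Pos, g π = if π ∈ L then 0 else 1)
    (hg₀ : ∀ π ∈ simples Pos, g₀ π = 1) :
    ∀ N : ℕ, ∀ α, α ∈ Pos → ∀ n m : ℕ, (n:ℝ) = g₀ α → n ≤ N → (m:ℝ) = g α → 1 ≤ m →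
      ∃ l : List V, l.length = m ∧ (∀ β ∈ l, β ∈ Pos ∧ β ∉ Submodule.span ℝ L) ∧
        l.sum = α := by
  have hPΦ : Pos ⊆ Φ := pos_subset hP
  have hg₀' : ∀ π ∈ simples Pos, g₀ π = @ite ℝ (π ∈ (∅:Set V)) (Classical.propDecidable _) 0 1 := by
    intro π hπ
    rw [hg₀ π hπ]
    simp
  have hnotspan : ∀ γ, γ ∈ Pos → ∀ mm : ℕ, (mm:ℝ) = g γ → 1 ≤ mm →
      γ ∉ Submodule.span ℝ L := by
    intro γ hγ mm hmm h1 hsp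
    have h2 := g_span_zero hLs hg γ hsp
    rw [h2] at hmm
    have : mm = 0 := by exact_mod_cast hmm
    omega
  intro N
  induction N with
  | zero =>
    intro α hα n m hn hnN hm hm1
    exfalso
    obtain ⟨n', hn', hn'0⟩ := g_values (L := (∅:Set V)) hfin hf hP hg₀' α hα
    have hne : n' ≠ 0 := by
      intro h
      have h2 := hn'0 h
      rw [Submodule.span_empty, Submodule.mem_bot] at h2
      exact h0 (h2 ▸ hPΦ hα)
    have : n' = n := by
      have := hn'.trans hn.symm
      exact_mod_cast this
    omega
  | succ N ih =>
    intro α hα n m hn hnN hm hm1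
    by_cases hm1' : m = 1
    · subst hm1'
      refine ⟨[α], rfl, ?_, by simp⟩
      intro β hβ
      rw [List.mem_singleton] at hβ
      subst hβ
      exact ⟨hα, hnotspan β hα 1 hm le_rfl⟩
    have hm2 : 2 ≤ m := by omega
    obtain ⟨l₀, hl₀ne, hl₀, hl₀s⟩ := pos_decompose hfin hf hP α hα
    have hαΦ : α ∈ Φ := hPΦ hα
    have hα0 : α ≠ 0 := fun h => h0 (h ▸ hαΦ)
    have hex : ∃ π ∈ l₀, 0 < ⟪α, π⟫ := by
      by_contra hno
      push_neg at hno
      have hsle : ⟪α, l₀.sum⟫ ≤ 0 := by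
        rw [inner_list_sum]
        apply list_sum_nonpos'
        intro x hx
        obtain ⟨π, hπ, rfl⟩ := List.mem_map.mp hx
        exact hno π hπ
      rw [hl₀s] at hsle
      exact absurd hsle (not_le.mpr (inner_self_pos' h0 hαΦ))
    obtain ⟨π, hπl, hπip⟩ := hex
    have hπs : π ∈ simples Pos := hl₀ π hπl
    have hπP : π ∈ Pos := hπs.1
    have hπΦ : π ∈ Φ := hPΦ hπP
    have hαπ : α ≠ π := by
      intro he
      have h1 : (m:ℝ) ≤ 1 := by
        rw [hm, he, hg π hπs]
        split <;> norm_num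
      have : m ≤ 1 := by exact_mod_cast h1
      omega
    by_cases hπL : π ∈ L
    · -- reflection case
      obtain ⟨kk, hkk⟩ := hcrys π hπΦ α hαΦ
      have hqπ : 0 < ⟪π, π⟫ := inner_self_pos' h0 hπΦ
      have hkkpos : (0:ℝ) < (kk:ℝ) := by rw [hkk]; positivity
      have hkk1 : 1 ≤ kk := by exact_mod_cast hkkpos
      have hα' : α - (2 * ⟪α, π⟫ / ⟪π, π⟫) • π ∈ Φ := hrefl π hπΦ α hαΦ
      have hgπ : g π = 0 := by rw [hg π hπs, if_pos hπL]
      have hg₀π : g₀ π = 1 := hg₀ π hπs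
      have hgα' : g (α - (2 * ⟪α, π⟫ / ⟪π, π⟫) • π) = (m:ℝ) := by
        rw [map_sub, map_smul, smul_eq_mul, hgπ, mul_zero, sub_zero, ← hm]
      have hα'P : α - (2 * ⟪α, π⟫ / ⟪π, π⟫) • π ∈ Pos := by
        rcases mem_pos_or_neg hf hP h0 hrefl hα' with h | h
        · exact h
        · exfalso
          obtain ⟨n'', hn'', -⟩ := g_values hfin hf hP hg _ h
          rw [map_neg, hgα'] at hn''
          have h1 : (0:ℝ) ≤ (n'':ℝ) := Nat.cast_nonneg n''
          have h2 : (1:ℝ) ≤ (m:ℝ) := by exact_mod_cast hm1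
          linarith
      obtain ⟨n₂, hn₂, -⟩ := g_values (L := (∅:Set V)) hfin hf hP hg₀' _ hα'P
      have hg₀α' : g₀ (α - (2 * ⟪α, π⟫ / ⟪π, π⟫) • π) = (n:ℝ) - (kk:ℝ) := by
        rw [map_sub, map_smul, smul_eq_mul, hg₀π, mul_one, ← hn, ← hkk]
      have hn₂N : n₂ ≤ N := by
        have h1 : (n₂:ℝ) + (kk:ℝ) = (n:ℝ) := by rw [hn₂, hg₀α']; ring
        have h3 : (n₂:ℤ) + kk = (n:ℤ) := by exact_mod_cast h1
        omega
      obtain ⟨l, hllen, hlmem, hlsum⟩ :=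
        ih _ hα'P n₂ m hn₂ hn₂N hgα'.symm hm1
      refine ⟨l.map (fun γ => γ - (2 * ⟪γ, π⟫ / ⟪π, π⟫) • π),
        by rw [List.length_map, hllen], ?_, ?_⟩
      · intro β hβ
        obtain ⟨γ, hγl, rfl⟩ := List.mem_map.mp hβ
        obtain ⟨hγP, hγspan⟩ := hlmem γ hγl
        have hγΦ : γ ∈ Φ := hPΦ hγP
        have hrΦ : γ - (2 * ⟪γ, π⟫ / ⟪π, π⟫) • π ∈ Φ := hrefl π hπΦ γ hγΦ
        obtain ⟨nγ, hnγ, hnγ0⟩ := g_values hfin hf hP hg γ hγP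
        have hnγ1 : 1 ≤ nγ := by
          rcases Nat.eq_zero_or_pos nγ with h' | h'
          · exact absurd (hnγ0 h') hγspan
          · exact h'
        have hgrγ : g (γ - (2 * ⟪γ, π⟫ / ⟪π, π⟫) • π) = g γ := by
          rw [map_sub, map_smul, smul_eq_mul, hgπ, mul_zero, sub_zero]
        constructor
        · rcases mem_pos_or_neg hf hP h0 hrefl hrΦ with h | h
          · exact h
          · exfalso
            obtain ⟨n'', hn'', -⟩ := g_values hfin hf hP hg _ h
            rw [map_neg, hgrγ, ← hnγ] at hn''
            have h1 : (0:ℝ) ≤ (n'':ℝ) := Nat.cast_nonneg n''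
            have h2 : (1:ℝ) ≤ (nγ:ℝ) := by exact_mod_cast hnγ1
            linarith
        · intro hmem
          have h2 := g_span_zero hLs hg _ hmem
          rw [hgrγ, ← hnγ] at h2
          have : nγ = 0 := by exact_mod_cast h2
          omega
      · have hradd : ∀ x y : V, (x + y) - (2 * ⟪x + y, π⟫ / ⟪π, π⟫) • π =
            (x - (2 * ⟪x, π⟫ / ⟪π, π⟫) • π) + (y - (2 * ⟪y, π⟫ / ⟪π, π⟫) • π) := by
          intro x y
          rw [inner_add_left]
          have h1 : 2 * (⟪x, π⟫ + ⟪y, π⟫) / ⟪π, π⟫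
              = 2 * ⟪x, π⟫ / ⟪π, π⟫ + 2 * ⟪y, π⟫ / ⟪π, π⟫ := by ring
          rw [h1, add_smul]
          abel
        have hrsum : ∀ l' : List V,
            (l'.map (fun γ => γ - (2 * ⟪γ, π⟫ / ⟪π, π⟫) • π)).sum =
              l'.sum - (2 * ⟪l'.sum, π⟫ / ⟪π, π⟫) • π := by
          intro l'
          induction l' with
          | nil => simp
          | cons a t iht =>
            rw [List.map_cons, List.sum_cons, List.sum_cons, iht, ← hradd]
        rw [hrsum, hlsum]
        have hip' : ⟪α - (2 * ⟪α, π⟫ / ⟪π, π⟫) • π, π⟫ = -⟪α, π⟫ := by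
          rw [inner_sub_left, real_inner_smul_left]
          field_simp
          ring
        rw [hip']
        have h2 : 2 * -⟪α, π⟫ / ⟪π, π⟫ = -(2 * ⟪α, π⟫ / ⟪π, π⟫) := by ring
        rw [h2, neg_smul, sub_neg_eq_add, sub_add_cancel]
    · -- π ∉ L
      have hsub : α - π ∈ Φ := sub_mem h0 hrefl hcrys hαΦ hπΦ hπip hαπ
      have hβP : α - π ∈ Pos := by
        rcases mem_pos_or_neg hf hP h0 hrefl hsub with h | h
        · exact h
        · exfalso
          rw [neg_sub] at h
          exact hπs.2 ⟨α, hα, π - α, h, by abel⟩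
      have hgπ : g π = 1 := by rw [hg π hπs, if_neg hπL]
      have hg₀π : g₀ π = 1 := hg₀ π hπs
      obtain ⟨n₂, hn₂, -⟩ := g_values (L := (∅:Set V)) hfin hf hP hg₀' _ hβP
      have hg₀β : g₀ (α - π) = (n:ℝ) - 1 := by
        rw [map_sub, hg₀π, ← hn]
      have hn₂N : n₂ ≤ N := by
        have h1 : (n₂:ℝ) + 1 = (n:ℝ) := by rw [hn₂, hg₀β]; ring
        have : n₂ + 1 = n := by exact_mod_cast h1
        omega
      have hgβ : ((m-1 : ℕ):ℝ) = g (α - π) := by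
        rw [map_sub, hgπ, ← hm, Nat.cast_sub hm1]
        push_cast
        ring
      obtain ⟨l, hllen, hlmem, hlsum⟩ := ih _ hβP n₂ (m-1) hn₂ hn₂N hgβ (by omega)
      refine ⟨π :: l, ?_, ?_, ?_⟩
      · rw [List.length_cons, hllen]; omega
      · intro β hβ
        rcases List.mem_cons.mp hβ with h | h
        · subst h
          refine ⟨hπP, ?_⟩
          intro hsp
          have h2 := g_span_zero hLs hg β hsp
          rw [hgπ] at h2
          norm_num at h2
        · exact hlmem β h
      · rw [List.sum_cons, hlsum]; abel

lemma g0_nat (hfin : Φ.Finite) (hf : ∀ α ∈ Φ, f α ≠ 0)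
    (hP : Pos = {α ∈ Φ | 0 < f α}) (hg₀ : ∀ π ∈ simples Pos, g₀ π = 1) :
    ∀ γ ∈ Pos, ∃ n : ℕ, (n:ℝ) = g₀ γ := by
  have hg₀' : ∀ π ∈ simples Pos,
      g₀ π = @ite ℝ (π ∈ (∅:Set V)) (Classical.propDecidable _) 0 1 := by
    intro π hπ
    rw [hg₀ π hπ]
    simp
  intro γ hγ
  obtain ⟨n, hn, -⟩ := g_values (L := (∅:Set V)) hfin hf hP hg₀' γ hγ
  exact ⟨n, hn⟩

end DLHL

open AffineBiclosed Classical in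
/-- Let `Φ` be an irreducible crystallographic root system with positive system `Φ⁺` and
simple system `Π`, and `L ⊊ Π`. Then `d_L(α) = h_L(α)` for every `α ∈ Φ⁺`, where `h_L(α)`
is the sum of the coefficients outside `L` in the expansion `α = Σ_{π ∈ Π} k_π π`. -/
theorem dL_eq_hL
    {V : Type*} [NormedAddCommGroup V] [InnerProductSpace ℝ V]
    {Φ Pos : Set V} (hΦ : IsIrrCrystRootSystem Φ) (hPos : IsPositiveSystem Φ Pos)
    {L : Set V} (hL : L ⊂ simples Pos)
    {α : V} (hα : α ∈ Pos) (k : V →₀ ℕ) (hsupp : ↑k.support ⊆ simples Pos)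
    (hsum : (k.sum fun π n => n • π) = α) :
    dL Φ Pos L α = k.sum fun π n => if π ∈ L then 0 else n := by
  classical
  obtain ⟨f, hf, hP⟩ := hPos
  obtain ⟨hfin, h0, hspan, hrefl, hcrys, hred, hirr⟩ := hΦ
  have hLs : L ⊆ simples Pos := hL.subset
  have hPΦ : Pos ⊆ Φ := DLHL.pos_subset hP
  have hobt : ∀ π ∈ simples Pos, ∀ π' ∈ simples Pos, π ≠ π' → ⟪π, π'⟫ ≤ 0 :=
    fun π hπ π' hπ' hne => DLHL.simples_obtuse hf hP h0 hrefl hcrys hπ hπ' hne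
  have hindep := DLHL.simples_indep hf hP hobt
  have hsp := DLHL.simples_span hspan h0 hrefl hfin hf hP
  obtain ⟨g, hg'⟩ := DLHL.exists_functional hindep hsp
    (fun π => if π ∈ L then (0:ℝ) else 1)
  obtain ⟨g₀, hg₀'⟩ := DLHL.exists_functional hindep hsp (fun _ => (1:ℝ))
  have hg : ∀ π ∈ simples Pos, g π = if π ∈ L then (0:ℝ) else 1 :=
    fun π hπ => hg' π hπ
  have hg₀ : ∀ π ∈ simples Pos, g₀ π = 1 := fun π hπ => hg₀' π hπ
  set m : ℕ := k.sum fun π n => if π ∈ L then 0 else n with hmdef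
  have hgα : g α = (m:ℝ) := by
    rw [← hsum, hmdef]
    rw [Finsupp.sum, Finsupp.sum, map_sum, Nat.cast_sum]
    refine Finset.sum_congr rfl ?_
    intro π hπ
    have hπs : π ∈ simples Pos := hsupp (Finset.mem_coe.mpr hπ)
    rw [map_nsmul, hg π hπs]
    by_cases hπL : π ∈ L
    · rw [if_pos hπL, if_pos hπL]
      simp
    · rw [if_neg hπL, if_neg hπL]
      simp [nsmul_eq_mul]
  by_cases hm0 : m = 0
  · rw [hm0]
    have hsupL : ∀ π ∈ k.support, π ∈ L := by
      intro π hπ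
      by_contra hπL
      have h1 : ∀ p ∈ k.support, (if p ∈ L then 0 else k p) = 0 := by
        rw [← Finset.sum_eq_zero_iff]
        exact hm0
      have h2 := h1 π hπ
      rw [if_neg hπL] at h2
      exact (Finsupp.mem_support_iff.mp hπ) h2
    have hαspan : α ∈ Submodule.span ℝ L := by
      rw [← hsum, Finsupp.sum]
      refine Submodule.sum_mem _ ?_
      intro π hπ
      exact nsmul_mem (Submodule.subset_span (hsupL π hπ)) _
    have hnot : α ∉ posLM Φ Pos L ∅ := by
      rw [DLHL.mem_posLM h0 hPΦ]
      rintro ⟨-, h2⟩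
      exact h2 hαspan
    simp only [dL]
    rw [if_neg hnot]
  · have hm1 : 1 ≤ m := Nat.one_le_iff_ne_zero.mpr hm0
    have hαspan : α ∉ Submodule.span ℝ L := by
      intro h
      have h2 := DLHL.g_span_zero hLs hg α h
      rw [h2] at hgα
      exact hm0 (by exact_mod_cast hgα.symm)
    have hαLM : α ∈ posLM Φ Pos L ∅ := (DLHL.mem_posLM h0 hPΦ).mpr ⟨hα, hαspan⟩
    simp only [dL]
    rw [if_pos hαLM]
    have hub : ∀ n' ∈ {n : ℕ | ∃ l : List V, l.length = n ∧
        (∀ β ∈ l, β ∈ posLM Φ Pos L ∅) ∧ l.sum = α}, n' ≤ m := by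
      rintro n' ⟨l, hlen, hlm, hls⟩
      have h2 := DLHL.upper_bound hfin hf hP hg l
        (fun β hβ => (DLHL.mem_posLM h0 hPΦ).mp (hlm β hβ))
      rw [hls, hgα] at h2
      rw [← hlen]
      exact_mod_cast h2
    have hmS : m ∈ {n : ℕ | ∃ l : List V, l.length = n ∧
        (∀ β ∈ l, β ∈ posLM Φ Pos L ∅) ∧ l.sum = α} := by
      obtain ⟨n₀, hn₀⟩ := DLHL.g0_nat hfin hf hP hg₀ α hα
      obtain ⟨l, hlen, hlm, hls⟩ := DLHL.lower_bound h0 hfin hrefl hcrys hf hP hLs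
        hg hg₀ n₀ α hα n₀ m hn₀ le_rfl hgα.symm hm1
      exact ⟨l, hlen, fun β hβ => (DLHL.mem_posLM h0 hPΦ).mpr (hlm β hβ), hls⟩
    exact le_antisymm (csSup_le ⟨m, hmS⟩ hub) (le_csSup ⟨m, hub⟩ hmS)
end
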